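/- arXiv:2303.08180 — 4 statements merged into one kernel-verified Lean document; each statement's English description precedes it below -/
import Mathlib

section
/- The linear map ℜ on the Schrödinger algebra S_2 determined on the basis by ℜ(s_{12}) = z and ℜ(u) = 0 for u ∈ {f, h, e, z, x_1, y_1, x_2, y_2} is a 1/2-derivation of S_2, and it is not a scalar multiple of the identity map. -/
noncomputable section

open Submodule

/-- Index type for the standard basis
`{e, f, h, z, x_i, y_i (1 ≤ i ≤ n), s_{jk} (1 ≤ j < k ≤ n)}`
of the Schrödinger algebra `S_n` (indices shifted to start from `0`). -/
inductive SIdx (n : ℕ) : Type where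
  | E : SIdx n
  | F : SIdx n
  | H : SIdx n
  | Z : SIdx n
  | X : Fin n → SIdx n
  | Y : Fin n → SIdx n
  | S : (j k : Fin n) → j < k → SIdx n

/-- Kronecker delta with values in `ℂ`. -/
def kd {n : ℕ} (i j : Fin n) : ℂ := if i = j then 1 else 0

variable {n : ℕ} {L : Type*} [LieRing L] [LieAlgebra ℂ L]

/-- The element `s_{jk}` for arbitrary indices, with the convention
`s_{kj} = -s_{jk}` and `s_{jj} = 0`. -/
def sg (b : Module.Basis (SIdx n) ℂ L) (j k : Fin n) : L :=
  if h : j < k then b (.S j k h)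
  else if h' : k < j then - b (.S k j h')
  else 0

/-- A basis of a complex Lie algebra indexed by `SIdx n` realizes the
Schrödinger algebra `S_n` if the brackets of basis vectors are as follows
(all brackets of basis vectors not determined by the relations below and
anticommutativity are zero). -/
structure IsSchrodinger (b : Module.Basis (SIdx n) ℂ L) : Prop where
  lie_e_f : ⁅b .E, b .F⁆ = b .H
  lie_h_e : ⁅b .H, b .E⁆ = (2 : ℂ) • b .E
  lie_f_h : ⁅b .F, b .H⁆ = (2 : ℂ) • b .F
  lie_x_y : ∀ i j, ⁅b (.X i), b (.Y j)⁆ = kd i j • b .Z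
  lie_x_x : ∀ i j, ⁅b (.X i), b (.X j)⁆ = 0
  lie_y_y : ∀ i j, ⁅b (.Y i), b (.Y j)⁆ = 0
  lie_h_x : ∀ i, ⁅b .H, b (.X i)⁆ = b (.X i)
  lie_h_y : ∀ i, ⁅b .H, b (.Y i)⁆ = - b (.Y i)
  lie_e_y : ∀ i, ⁅b .E, b (.Y i)⁆ = b (.X i)
  lie_e_x : ∀ i, ⁅b .E, b (.X i)⁆ = 0
  lie_f_x : ∀ i, ⁅b .F, b (.X i)⁆ = b (.Y i)
  lie_f_y : ∀ i, ⁅b .F, b (.Y i)⁆ = 0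
  lie_z : ∀ u : SIdx n, ⁅b .Z, b u⁆ = 0
  lie_s_x : ∀ j k i, ⁅sg b j k, b (.X i)⁆ = kd k i • b (.X j) - kd j i • b (.X k)
  lie_s_y : ∀ j k i, ⁅sg b j k, b (.Y i)⁆ = kd k i • b (.Y j) - kd j i • b (.Y k)
  lie_s_s : ∀ j k l m, ⁅sg b j k, sg b l m⁆ =
      kd l k • sg b j m + kd j m • sg b k l + kd m k • sg b l j + kd l j • sg b m k
  lie_e_s : ∀ j k, ⁅b .E, sg b j k⁆ = 0
  lie_f_s : ∀ j k, ⁅b .F, sg b j k⁆ = 0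
  lie_h_s : ∀ j k, ⁅b .H, sg b j k⁆ = 0

/-- A `1/2`-derivation of a complex Lie algebra: a linear map `φ` with
`φ([x,y]) = (1/2)([φ(x),y] + [x,φ(y)])`. -/
def IsHalfDeriv (φ : L →ₗ[ℂ] L) : Prop :=
  ∀ x y : L, φ ⁅x, y⁆ = (2⁻¹ : ℂ) • (⁅φ x, y⁆ + ⁅x, φ y⁆)

/-- The set of basis vectors spanning the even part `(S_n)₀`:
`{e, f, h, z, s_{kl}}`. -/
def evenSet (b : Module.Basis (SIdx n) ℂ L) : Set L :=
  {v | v = b .E ∨ v = b .F ∨ v = b .H ∨ v = b .Z ∨ ∃ j k, ∃ h : j < k, v = b (.S j k h)}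

/-- The set of basis vectors spanning the odd part `(S_n)₁`: `{x_i, y_i}`. -/
def oddSet (b : Module.Basis (SIdx n) ℂ L) : Set L :=
  {v | ∃ i : Fin n, v = b (.X i) ∨ v = b (.Y i)}

/-- The linear map `ℜ` sending `s_{jk}` to `z` and all other basis vectors to `0`. -/
def Rmap (b : Module.Basis (SIdx n) ℂ L) : L →ₗ[ℂ] L :=
  b.constr ℂ fun u => match u with
    | .S _ _ _ => b .Z
    | _ => 0

/-- The linear map `ℜ` on the Schrödinger algebra `S₂`
determined by `ℜ(s₁₂) = z` and `ℜ(u) = 0` for the other basis vectors is a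
`1/2`-derivation of `S₂`, and it is not a scalar multiple of the identity. -/
theorem Rmap_is_nontrivial_half_derivation
    (L : Type*) [LieRing L] [LieAlgebra ℂ L]
    (b : Module.Basis (SIdx 2) ℂ L) (hb : IsSchrodinger b) :
    Rmap b (b (.S 0 1 (by decide))) = b .Z ∧
    (∀ u : SIdx 2, u ≠ .S 0 1 (by decide) → Rmap b (b u) = 0) ∧
    IsHalfDeriv (Rmap b) ∧
    ¬ ∃ c : ℂ, Rmap b = c • LinearMap.id := by
  classical
  have h01 : (0 : Fin 2) < 1 := by decide
  -- every `S` basis vector is the canonical `s₀₁`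
  have hsjk : ∀ (j k : Fin 2) (h : j < k), b (SIdx.S j k h) = b (SIdx.S 0 1 h01) := by
    intro j k h
    congr 1
    fin_cases j <;> fin_cases k <;> first | rfl | exact absurd h (by decide)
  have hsg : sg b 0 1 = b (SIdx.S 0 1 h01) := by
    rw [sg, dif_pos h01]
  -- values of φ on basis vectors
  have hφE : Rmap b (b .E) = 0 := by simp [Rmap, Module.Basis.constr_basis]
  have hφF : Rmap b (b .F) = 0 := by simp [Rmap, Module.Basis.constr_basis]
  have hφH : Rmap b (b .H) = 0 := by simp [Rmap, Module.Basis.constr_basis]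
  have hφZ : Rmap b (b .Z) = 0 := by simp [Rmap, Module.Basis.constr_basis]
  have hφX : ∀ i, Rmap b (b (.X i)) = 0 := fun i => by simp [Rmap, Module.Basis.constr_basis]
  have hφY : ∀ i, Rmap b (b (.Y i)) = 0 := fun i => by simp [Rmap, Module.Basis.constr_basis]
  have hφS : ∀ (j k : Fin 2) (h : j < k), Rmap b (b (.S j k h)) = b .Z := fun j k h => by
    simp [Rmap, Module.Basis.constr_basis]
  -- z is central
  have hzall : ∀ v : L, ⁅b SIdx.Z, v⁆ = 0 := by
    intro v
    have had : (LieAlgebra.ad ℂ L (b SIdx.Z) : L →ₗ[ℂ] L) = 0 :=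
      b.ext fun u => by simpa using hb.lie_z u
    simpa [LieAlgebra.ad_apply] using LinearMap.congr_fun had v
  have hzall' : ∀ v : L, ⁅v, b SIdx.Z⁆ = 0 := fun v => by
    rw [← lie_skew, hzall, neg_zero]
  -- φ equals the coordinate functional at s₀₁ scaled by z
  have hcoord : Rmap b = (b.coord (.S 0 1 h01)).smulRight (b SIdx.Z) := by
    refine b.ext fun u => ?_
    cases u with
    | S j k h =>
        rw [hsjk j k h, hφS 0 1 h01]
        simp [Module.Basis.coord_apply, Module.Basis.repr_self]
    | E => simp [hφE, Module.Basis.coord_apply, Module.Basis.repr_self, Finsupp.single_apply]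
    | F => simp [hφF, Module.Basis.coord_apply, Module.Basis.repr_self, Finsupp.single_apply]
    | H => simp [hφH, Module.Basis.coord_apply, Module.Basis.repr_self, Finsupp.single_apply]
    | Z => simp [hφZ, Module.Basis.coord_apply, Module.Basis.repr_self, Finsupp.single_apply]
    | X i => simp [hφX, Module.Basis.coord_apply, Module.Basis.repr_self, Finsupp.single_apply]
    | Y i => simp [hφY, Module.Basis.coord_apply, Module.Basis.repr_self, Finsupp.single_apply]
  -- brackets of basis vectors, both orders
  have l2 : ⁅b SIdx.F, b SIdx.E⁆ = -b SIdx.H := by rw [← lie_skew, hb.lie_e_f]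
  have l4 : ⁅b SIdx.E, b SIdx.H⁆ = -((2:ℂ) • b SIdx.E) := by rw [← lie_skew, hb.lie_h_e]
  have l6 : ⁅b SIdx.H, b SIdx.F⁆ = -((2:ℂ) • b SIdx.F) := by rw [← lie_skew, hb.lie_f_h]
  have l8 : ∀ i j, ⁅b (SIdx.Y i), b (SIdx.X j)⁆ = -(kd j i • b SIdx.Z) := fun i j => by
    rw [← lie_skew, hb.lie_x_y]
  have l11 : ∀ i, ⁅b (SIdx.X i), b SIdx.H⁆ = -b (SIdx.X i) := fun i => by
    rw [← lie_skew, hb.lie_h_x]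
  have l13 : ∀ i, ⁅b (SIdx.Y i), b SIdx.H⁆ = -(-b (SIdx.Y i)) := fun i => by
    rw [← lie_skew, hb.lie_h_y]
  have l14 : ∀ i, ⁅b (SIdx.Y i), b SIdx.E⁆ = -b (SIdx.X i) := fun i => by
    rw [← lie_skew, hb.lie_e_y]
  have l15 : ∀ i, ⁅b (SIdx.X i), b SIdx.E⁆ = 0 := fun i => by
    rw [← lie_skew, hb.lie_e_x, neg_zero]
  have l16 : ∀ i, ⁅b (SIdx.X i), b SIdx.F⁆ = -b (SIdx.Y i) := fun i => by
    rw [← lie_skew, hb.lie_f_x]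
  have l17 : ∀ i, ⁅b (SIdx.Y i), b SIdx.F⁆ = 0 := fun i => by
    rw [← lie_skew, hb.lie_f_y, neg_zero]
  have lsx : ∀ i, ⁅b (SIdx.S 0 1 h01), b (SIdx.X i)⁆
      = kd 1 i • b (SIdx.X 0) - kd 0 i • b (SIdx.X 1) := fun i => by
    rw [← hsg]; exact hb.lie_s_x 0 1 i
  have lsy : ∀ i, ⁅b (SIdx.S 0 1 h01), b (SIdx.Y i)⁆
      = kd 1 i • b (SIdx.Y 0) - kd 0 i • b (SIdx.Y 1) := fun i => by
    rw [← hsg]; exact hb.lie_s_y 0 1 i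
  have lxs : ∀ i, ⁅b (SIdx.X i), b (SIdx.S 0 1 h01)⁆
      = -(kd 1 i • b (SIdx.X 0) - kd 0 i • b (SIdx.X 1)) := fun i => by
    rw [← lie_skew, lsx]
  have lys : ∀ i, ⁅b (SIdx.Y i), b (SIdx.S 0 1 h01)⁆
      = -(kd 1 i • b (SIdx.Y 0) - kd 0 i • b (SIdx.Y 1)) := fun i => by
    rw [← lie_skew, lsy]
  have les : ⁅b SIdx.E, b (SIdx.S 0 1 h01)⁆ = 0 := by rw [← hsg]; exact hb.lie_e_s 0 1
  have lfs : ⁅b SIdx.F, b (SIdx.S 0 1 h01)⁆ = 0 := by rw [← hsg]; exact hb.lie_f_s 0 1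
  have lhs' : ⁅b SIdx.H, b (SIdx.S 0 1 h01)⁆ = 0 := by rw [← hsg]; exact hb.lie_h_s 0 1
  have lse : ⁅b (SIdx.S 0 1 h01), b SIdx.E⁆ = 0 := by rw [← lie_skew, les, neg_zero]
  have lsf : ⁅b (SIdx.S 0 1 h01), b SIdx.F⁆ = 0 := by rw [← lie_skew, lfs, neg_zero]
  have lsh : ⁅b (SIdx.S 0 1 h01), b SIdx.H⁆ = 0 := by rw [← lie_skew, lhs', neg_zero]
  -- φ vanishes on all brackets
  have hC : ∀ x y : L, Rmap b ⁅x, y⁆ = 0 := by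
    have hA : ((LieAlgebra.ad ℂ L : L →ₗ[ℂ] Module.End ℂ L).compr₂ (Rmap b)) = 0 := by
      refine b.ext fun u => b.ext fun v => ?_
      have key : Rmap b ⁅b u, b v⁆ = 0 := by
        rcases u with _ | _ | _ | _ | i | i | ⟨j, k, h⟩ <;>
          rcases v with _ | _ | _ | _ | i' | i' | ⟨j', k', h'⟩ <;>
          (try simp only [hsjk]) <;>
          simp [hb.lie_e_f, hb.lie_h_e, hb.lie_f_h, hb.lie_x_y, hb.lie_x_x, hb.lie_y_y,
            hb.lie_h_x, hb.lie_h_y, hb.lie_e_y, hb.lie_e_x, hb.lie_f_x, hb.lie_f_y,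
            hb.lie_z, hzall', l2, l4, l6, l8, l11, l13, l14, l15, l16, l17,
            lsx, lsy, lxs, lys, les, lfs, lhs', lse, lsf, lsh,
            hφE, hφF, hφH, hφZ, hφX, hφY, map_smul, map_neg, map_sub, map_add]
      simpa [LinearMap.compr₂_apply, LieAlgebra.ad_apply] using key
    intro x y
    have := LinearMap.congr_fun (LinearMap.congr_fun hA x) y
    simpa [LinearMap.compr₂_apply, LieAlgebra.ad_apply] using this
  refine ⟨by simpa using hφS 0 1 h01, ?_, ?_, ?_⟩
  · intro u hu
    cases u with
    | S j k h =>
        exfalso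
        apply hu
        fin_cases j <;> fin_cases k <;> first | rfl | exact absurd h (by decide)
    | E => exact hφE
    | F => exact hφF
    | H => exact hφH
    | Z => exact hφZ
    | X i => exact hφX i
    | Y i => exact hφY i
  · intro x y
    have hx : Rmap b x = (b.coord (.S 0 1 h01) x) • b SIdx.Z := by
      rw [hcoord]; simp
    have hy : Rmap b y = (b.coord (.S 0 1 h01) y) • b SIdx.Z := by
      rw [hcoord]; simp
    rw [hC, hx, hy, smul_lie, lie_smul, hzall, hzall']
    simp
  · rintro ⟨c, hc⟩
    have h1 := LinearMap.congr_fun hc (b SIdx.E)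
    rw [hφE] at h1
    simp only [LinearMap.smul_apply, LinearMap.id_apply] at h1
    have hc0 : c = 0 := by
      rcases smul_eq_zero.mp h1.symm with h | h
      · exact h
      · exact absurd h (b.ne_zero _)
    have h2 := LinearMap.congr_fun hc (b (SIdx.S 0 1 h01))
    rw [hφS 0 1 h01, hc0] at h2
    simp only [LinearMap.smul_apply, LinearMap.id_apply, zero_smul] at h2
    exact b.ne_zero SIdx.Z h2
end
end

section
/- Let n ≥ 3 and let φ_0 be a 1/2-derivation of the Schrödinger algebra S_n which preserves the Z/2Z-grading, i.e. φ_0((S_n)_0) ⊆ (S_n)_0 and φ_0((S_n)_1) ⊆ (S_n)_1, where (S_n)_0 is the span of {e, f, h, z, s_{kl} (1 ≤ k < l ≤ n)} and (S_n)_1 is the span of {x_i, y_i (1 ≤ i ≤ n)}. Then φ_0 is trivial, i.e. φ_0 is a scalar multiple of the identity map. -/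
noncomputable section

open Submodule

variable {n : ℕ} {L : Type*} [LieRing L] [LieAlgebra ℂ L]

namespace SchroAux

instance : DecidableEq (SIdx n) := fun _ _ => Classical.dec _


lemma sg_eq (b : Module.Basis (SIdx n) ℂ L) {j k : Fin n} (h : j < k) :
    sg b j k = b (.S j k h) := dif_pos h

lemma sg_diag (b : Module.Basis (SIdx n) ℂ L) (j : Fin n) : sg b j j = 0 := by
  unfold sg; rw [dif_neg (lt_irrefl j), dif_neg (lt_irrefl j)]

lemma sg_neg (b : Module.Basis (SIdx n) ℂ L) {j k : Fin n} (h : k < j) :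
    sg b j k = - b (.S k j h) := by
  unfold sg; rw [dif_neg (asymm h), dif_pos h]

lemma lie_z_sg (b : Module.Basis (SIdx n) ℂ L) (hb : IsSchrodinger b) (j k : Fin n) :
    ⁅b SIdx.Z, sg b j k⁆ = 0 := by
  unfold sg
  split_ifs with h1 h2
  · exact hb.lie_z _
  · rw [lie_neg, hb.lie_z, neg_zero]
  · exact lie_zero _

lemma memE (b : Module.Basis (SIdx n) ℂ L) : b SIdx.E ∈ span ℂ (evenSet b) :=
  subset_span (Or.inl rfl)
lemma memF (b : Module.Basis (SIdx n) ℂ L) : b SIdx.F ∈ span ℂ (evenSet b) :=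
  subset_span (Or.inr (Or.inl rfl))
lemma memH (b : Module.Basis (SIdx n) ℂ L) : b SIdx.H ∈ span ℂ (evenSet b) :=
  subset_span (Or.inr (Or.inr (Or.inl rfl)))
lemma memZ (b : Module.Basis (SIdx n) ℂ L) : b SIdx.Z ∈ span ℂ (evenSet b) :=
  subset_span (Or.inr (Or.inr (Or.inr (Or.inl rfl))))
lemma memS (b : Module.Basis (SIdx n) ℂ L) {j k : Fin n} (h : j < k) :
    b (SIdx.S j k h) ∈ span ℂ (evenSet b) :=
  subset_span (Or.inr (Or.inr (Or.inr (Or.inr ⟨j, k, h, rfl⟩))))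
lemma memX (b : Module.Basis (SIdx n) ℂ L) (i : Fin n) : b (SIdx.X i) ∈ span ℂ (oddSet b) :=
  subset_span ⟨i, Or.inl rfl⟩
lemma memY (b : Module.Basis (SIdx n) ℂ L) (i : Fin n) : b (SIdx.Y i) ∈ span ℂ (oddSet b) :=
  subset_span ⟨i, Or.inr rfl⟩

lemma even_repr_X (b : Module.Basis (SIdx n) ℂ L) {v : L} (hv : v ∈ span ℂ (evenSet b))
    (i : Fin n) : b.repr v (SIdx.X i) = 0 := by
  induction hv using span_induction with
  | mem x hx =>
    rcases hx with rfl | rfl | rfl | rfl | ⟨j, k, h, rfl⟩ <;>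
      simp [Module.Basis.repr_self, Finsupp.single_apply]
  | zero => simp
  | add x y _ _ ihx ihy => simp [ihx, ihy]
  | smul a x _ ih => simp [ih]

lemma even_repr_Y (b : Module.Basis (SIdx n) ℂ L) {v : L} (hv : v ∈ span ℂ (evenSet b))
    (i : Fin n) : b.repr v (SIdx.Y i) = 0 := by
  induction hv using span_induction with
  | mem x hx =>
    rcases hx with rfl | rfl | rfl | rfl | ⟨j, k, h, rfl⟩ <;>
      simp [Module.Basis.repr_self, Finsupp.single_apply]
  | zero => simp
  | add x y _ _ ihx ihy => simp [ihx, ihy]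
  | smul a x _ ih => simp [ih]


lemma lie_S_x (b : Module.Basis (SIdx n) ℂ L) (hb : IsSchrodinger b) {j k : Fin n} (h : j < k)
    (i : Fin n) :
    ⁅b (SIdx.S j k h), b (SIdx.X i)⁆ = kd k i • b (SIdx.X j) - kd j i • b (SIdx.X k) := by
  have := hb.lie_s_x j k i; rwa [sg_eq b h] at this

lemma lie_S_y (b : Module.Basis (SIdx n) ℂ L) (hb : IsSchrodinger b) {j k : Fin n} (h : j < k)
    (i : Fin n) :
    ⁅b (SIdx.S j k h), b (SIdx.Y i)⁆ = kd k i • b (SIdx.Y j) - kd j i • b (SIdx.Y k) := by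
  have := hb.lie_s_y j k i; rwa [sg_eq b h] at this

lemma evLieE (b : Module.Basis (SIdx n) ℂ L) (hb : IsSchrodinger b) {v : L}
    (hv : v ∈ span ℂ (evenSet b)) :
    ⁅v, b SIdx.E⁆ = (2 * b.repr v SIdx.H) • b SIdx.E - (b.repr v SIdx.F) • b SIdx.H := by
  induction hv using span_induction with
  | mem x hx =>
    rcases hx with rfl | rfl | rfl | rfl | ⟨j, k, h, rfl⟩
    · simp [Module.Basis.repr_self, Finsupp.single_apply]
    · have h1 : ⁅b SIdx.F, b SIdx.E⁆ = - b SIdx.H := by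
        rw [← lie_skew, hb.lie_e_f]
      rw [h1]; simp [Module.Basis.repr_self, Finsupp.single_apply]
    · rw [hb.lie_h_e]; simp [Module.Basis.repr_self, Finsupp.single_apply]
    · rw [hb.lie_z]; simp [Module.Basis.repr_self, Finsupp.single_apply]
    · have h1 : ⁅b (SIdx.S j k h), b SIdx.E⁆ = 0 := by
        rw [← sg_eq b h, ← lie_skew, hb.lie_e_s, neg_zero]
      rw [h1]; simp [Module.Basis.repr_self, Finsupp.single_apply]
  | zero => simp
  | add x y _ _ ihx ihy =>
    rw [add_lie, ihx, ihy]; simp only [map_add, Finsupp.add_apply]; module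
  | smul a x _ ih =>
    rw [smul_lie, ih]; simp only [map_smul, Finsupp.smul_apply, smul_eq_mul]; module

lemma evLieF (b : Module.Basis (SIdx n) ℂ L) (hb : IsSchrodinger b) {v : L}
    (hv : v ∈ span ℂ (evenSet b)) :
    ⁅v, b SIdx.F⁆ = (b.repr v SIdx.E) • b SIdx.H - (2 * b.repr v SIdx.H) • b SIdx.F := by
  induction hv using span_induction with
  | mem x hx =>
    rcases hx with rfl | rfl | rfl | rfl | ⟨j, k, h, rfl⟩
    · rw [hb.lie_e_f]; simp [Module.Basis.repr_self, Finsupp.single_apply]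
    · simp [Module.Basis.repr_self, Finsupp.single_apply]
    · have h1 : ⁅b SIdx.H, b SIdx.F⁆ = -((2:ℂ) • b SIdx.F) := by
        rw [← lie_skew, hb.lie_f_h]
      rw [h1]; simp [Module.Basis.repr_self, Finsupp.single_apply]
    · rw [hb.lie_z]; simp [Module.Basis.repr_self, Finsupp.single_apply]
    · have h1 : ⁅b (SIdx.S j k h), b SIdx.F⁆ = 0 := by
        rw [← sg_eq b h, ← lie_skew, hb.lie_f_s, neg_zero]
      rw [h1]; simp [Module.Basis.repr_self, Finsupp.single_apply]
  | zero => simp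
  | add x y _ _ ihx ihy =>
    rw [add_lie, ihx, ihy]; simp only [map_add, Finsupp.add_apply]; module
  | smul a x _ ih =>
    rw [smul_lie, ih]; simp only [map_smul, Finsupp.smul_apply, smul_eq_mul]; module

lemma evLieH (b : Module.Basis (SIdx n) ℂ L) (hb : IsSchrodinger b) {v : L}
    (hv : v ∈ span ℂ (evenSet b)) :
    ⁅v, b SIdx.H⁆ = (2 * b.repr v SIdx.F) • b SIdx.F - (2 * b.repr v SIdx.E) • b SIdx.E := by
  induction hv using span_induction with
  | mem x hx =>
    rcases hx with rfl | rfl | rfl | rfl | ⟨j, k, h, rfl⟩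
    · have h1 : ⁅b SIdx.E, b SIdx.H⁆ = -((2:ℂ) • b SIdx.E) := by
        rw [← lie_skew, hb.lie_h_e]
      rw [h1]; simp [Module.Basis.repr_self, Finsupp.single_apply]
    · rw [hb.lie_f_h]; simp [Module.Basis.repr_self, Finsupp.single_apply]
    · simp [Module.Basis.repr_self, Finsupp.single_apply]
    · rw [hb.lie_z]; simp [Module.Basis.repr_self, Finsupp.single_apply]
    · have h1 : ⁅b (SIdx.S j k h), b SIdx.H⁆ = 0 := by
        rw [← sg_eq b h, ← lie_skew, hb.lie_h_s, neg_zero]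
      rw [h1]; simp [Module.Basis.repr_self, Finsupp.single_apply]
  | zero => simp
  | add x y _ _ ihx ihy =>
    rw [add_lie, ihx, ihy]; simp only [map_add, Finsupp.add_apply]; module
  | smul a x _ ih =>
    rw [smul_lie, ih]; simp only [map_smul, Finsupp.smul_apply, smul_eq_mul]; module
lemma evXcoordY (b : Module.Basis (SIdx n) ℂ L) (hb : IsSchrodinger b) {v : L}
    (hv : v ∈ span ℂ (evenSet b)) (i : Fin n) :
    b.repr ⁅v, b (SIdx.X i)⁆ (SIdx.Y i) = b.repr v SIdx.F := by
  induction hv using span_induction with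
  | mem x hx =>
    rcases hx with rfl | rfl | rfl | rfl | ⟨j, k, h, rfl⟩
    · rw [hb.lie_e_x]; simp [Module.Basis.repr_self, Finsupp.single_apply]
    · rw [hb.lie_f_x]; simp [Module.Basis.repr_self, Finsupp.single_apply]
    · rw [hb.lie_h_x]; simp [Module.Basis.repr_self, Finsupp.single_apply]
    · rw [hb.lie_z]; simp [Module.Basis.repr_self, Finsupp.single_apply]
    · rw [lie_S_x b hb h]
      simp [Module.Basis.repr_self, Finsupp.single_apply]
  | zero => simp
  | add x y _ _ ihx ihy => simp only [add_lie, map_add, Finsupp.add_apply, ihx, ihy]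
  | smul a x _ ih => simp only [smul_lie, map_smul, Finsupp.smul_apply, ih]

lemma evYcoordX (b : Module.Basis (SIdx n) ℂ L) (hb : IsSchrodinger b) {v : L}
    (hv : v ∈ span ℂ (evenSet b)) (i : Fin n) :
    b.repr ⁅v, b (SIdx.Y i)⁆ (SIdx.X i) = b.repr v SIdx.E := by
  induction hv using span_induction with
  | mem x hx =>
    rcases hx with rfl | rfl | rfl | rfl | ⟨j, k, h, rfl⟩
    · rw [hb.lie_e_y]; simp [Module.Basis.repr_self, Finsupp.single_apply]
    · rw [hb.lie_f_y]; simp [Module.Basis.repr_self, Finsupp.single_apply]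
    · rw [hb.lie_h_y]; simp [Module.Basis.repr_self, Finsupp.single_apply]
    · rw [hb.lie_z]; simp [Module.Basis.repr_self, Finsupp.single_apply]
    · rw [lie_S_y b hb h]
      simp [Module.Basis.repr_self, Finsupp.single_apply]
  | zero => simp
  | add x y _ _ ihx ihy => simp only [add_lie, map_add, Finsupp.add_apply, ihx, ihy]
  | smul a x _ ih => simp only [smul_lie, map_smul, Finsupp.smul_apply, ih]

lemma evXcoordX (b : Module.Basis (SIdx n) ℂ L) (hb : IsSchrodinger b) {v : L}
    (hv : v ∈ span ℂ (evenSet b)) (i : Fin n) :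
    b.repr ⁅v, b (SIdx.X i)⁆ (SIdx.X i) = b.repr v SIdx.H := by
  induction hv using span_induction with
  | mem x hx =>
    rcases hx with rfl | rfl | rfl | rfl | ⟨j, k, h, rfl⟩
    · rw [hb.lie_e_x]; simp [Module.Basis.repr_self, Finsupp.single_apply]
    · rw [hb.lie_f_x]; simp [Module.Basis.repr_self, Finsupp.single_apply]
    · rw [hb.lie_h_x]; simp [Module.Basis.repr_self, Finsupp.single_apply]
    · rw [hb.lie_z]; simp [Module.Basis.repr_self, Finsupp.single_apply]
    · rw [lie_S_x b hb h]
      simp only [map_sub, map_smul, Finsupp.sub_apply, Finsupp.smul_apply,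
        Module.Basis.repr_self, Finsupp.single_apply, smul_eq_mul, kd]
      have hjk : j ≠ k := ne_of_lt h
      split_ifs <;> simp_all
  | zero => simp
  | add x y _ _ ihx ihy => simp only [add_lie, map_add, Finsupp.add_apply, ihx, ihy]
  | smul a x _ ih => simp only [smul_lie, map_smul, Finsupp.smul_apply, ih]

lemma evXcoordXS (b : Module.Basis (SIdx n) ℂ L) (hb : IsSchrodinger b) {v : L}
    (hv : v ∈ span ℂ (evenSet b)) (a c : Fin n) (hac : a < c) :
    b.repr ⁅v, b (SIdx.X c)⁆ (SIdx.X a) = b.repr v (SIdx.S a c hac) := by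
  have hacne : a ≠ c := ne_of_lt hac
  induction hv using span_induction with
  | mem x hx =>
    rcases hx with rfl | rfl | rfl | rfl | ⟨j, k, h, rfl⟩
    · rw [hb.lie_e_x]; simp [Module.Basis.repr_self, Finsupp.single_apply]
    · rw [hb.lie_f_x]; simp [Module.Basis.repr_self, Finsupp.single_apply]
    · rw [hb.lie_h_x]
      simp [Module.Basis.repr_self, Finsupp.single_apply, hacne, hac.ne']
    · rw [hb.lie_z]; simp [Module.Basis.repr_self, Finsupp.single_apply]
    · rw [lie_S_x b hb h]
      have hjk : j ≠ k := ne_of_lt h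
      simp only [map_sub, map_smul, Finsupp.sub_apply, Finsupp.smul_apply,
        Module.Basis.repr_self, Finsupp.single_apply, smul_eq_mul, kd, SIdx.S.injEq]
      split_ifs <;> simp_all <;> omega
  | zero => simp
  | add x y _ _ ihx ihy => simp only [add_lie, map_add, Finsupp.add_apply, ihx, ihy]
  | smul a x _ ih => simp only [smul_lie, map_smul, Finsupp.smul_apply, ih]

lemma oddR2 (b : Module.Basis (SIdx n) ℂ L) (hb : IsSchrodinger b) {w : L}
    (hw : w ∈ span ℂ (oddSet b)) :
    ⁅b SIdx.F, ⁅b SIdx.E, w⁆⁆ = (2⁻¹ : ℂ) • (w - ⁅b SIdx.H, w⁆) := by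
  induction hw using span_induction with
  | mem x hx =>
    obtain ⟨i, rfl | rfl⟩ := hx
    · rw [hb.lie_e_x, lie_zero, hb.lie_h_x]; simp
    · rw [hb.lie_e_y, hb.lie_f_x, hb.lie_h_y]; module
  | zero => simp
  | add x y _ _ ihx ihy => rw [lie_add, lie_add, ihx, ihy, lie_add]; module
  | smul a x _ ih => rw [lie_smul, lie_smul, ih, lie_smul]; module
end SchroAux
set_option linter.unreachableTactic false in
set_option linter.unusedTactic false in
set_option linter.unnecessarySeqFocus false in
set_option maxHeartbeats 1600000 in
/-- For `n ≥ 3`, every `1/2`-derivation of the Schrödinger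
algebra `S_n` preserving the `ℤ/2ℤ`-grading is trivial, i.e. a scalar multiple
of the identity map. -/
theorem even_half_derivation_is_trivial (n : ℕ) (hn : 3 ≤ n)
    (L : Type*) [LieRing L] [LieAlgebra ℂ L]
    (b : Module.Basis (SIdx n) ℂ L) (hb : IsSchrodinger b)
    (φ : L →ₗ[ℂ] L) (hφ : IsHalfDeriv φ)
    (heven : ∀ x ∈ span ℂ (evenSet b), φ x ∈ span ℂ (evenSet b))
    (hodd : ∀ x ∈ span ℂ (oddSet b), φ x ∈ span ℂ (oddSet b)) :
    ∃ c : ℂ, φ = c • LinearMap.id := by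
  classical
  open SchroAux in
  have pE : φ (b SIdx.E) ∈ span ℂ (evenSet b) := heven _ (memE b)
  have pF : φ (b SIdx.F) ∈ span ℂ (evenSet b) := heven _ (memF b)
  have pH : φ (b SIdx.H) ∈ span ℂ (evenSet b) := heven _ (memH b)
  set c : ℂ := b.repr (φ (b SIdx.H)) SIdx.H with hc
  -- equation (1) : φ h = ½ (⁅φe, f⁆ + ⁅e, φf⁆)
  have eq1 : φ (b SIdx.H) = (2⁻¹ : ℂ) •
      (((b.repr (φ (b SIdx.E)) SIdx.E) • b SIdx.H
          - (2 * b.repr (φ (b SIdx.E)) SIdx.H) • b SIdx.F)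
        + -((2 * b.repr (φ (b SIdx.F)) SIdx.H) • b SIdx.E
          - (b.repr (φ (b SIdx.F)) SIdx.F) • b SIdx.H)) := by
    have h0 := hφ (b SIdx.E) (b SIdx.F)
    rw [hb.lie_e_f] at h0
    rw [h0, evLieF b hb pE, ← lie_skew (b SIdx.E) (φ (b SIdx.F)), evLieE b hb pF]
  -- equation (2) : 2 φ e = ½ (⁅φh, e⁆ + ⁅h, φe⁆)
  have eq2 : (2 : ℂ) • φ (b SIdx.E) = (2⁻¹ : ℂ) •
      (((2 * c) • b SIdx.E - (b.repr (φ (b SIdx.H)) SIdx.F) • b SIdx.H)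
        + -((2 * b.repr (φ (b SIdx.E)) SIdx.F) • b SIdx.F
          - (2 * b.repr (φ (b SIdx.E)) SIdx.E) • b SIdx.E)) := by
    have h0 := hφ (b SIdx.H) (b SIdx.E)
    rw [hb.lie_h_e, map_smul] at h0
    rw [h0, evLieE b hb pH, ← lie_skew (b SIdx.H) (φ (b SIdx.E)), evLieH b hb pE, hc]
  -- equation (3) : 2 φ f = ½ (⁅φf, h⁆ + ⁅f, φh⁆)
  have eq3 : (2 : ℂ) • φ (b SIdx.F) = (2⁻¹ : ℂ) •
      (((2 * b.repr (φ (b SIdx.F)) SIdx.F) • b SIdx.F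
          - (2 * b.repr (φ (b SIdx.F)) SIdx.E) • b SIdx.E)
        + -((b.repr (φ (b SIdx.H)) SIdx.E) • b SIdx.H - (2 * c) • b SIdx.F)) := by
    have h0 := hφ (b SIdx.F) (b SIdx.H)
    rw [hb.lie_f_h, map_smul] at h0
    rw [h0, evLieH b hb pF, ← lie_skew (b SIdx.F) (φ (b SIdx.H)), evLieF b hb pH, hc]
  -- coordinates from eq1
  have c1F : b.repr (φ (b SIdx.H)) SIdx.F = - b.repr (φ (b SIdx.E)) SIdx.H := by
    have h := congrArg (fun w => b.repr w SIdx.F) eq1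
    simp [map_add, map_sub, map_smul, map_neg, Finsupp.add_apply, Finsupp.sub_apply,
      Finsupp.smul_apply, Finsupp.neg_apply, Module.Basis.repr_self, Finsupp.single_apply] at h
    first
      | exact h
      | linear_combination h
      | linear_combination (3⁻¹ : ℂ) * h
      | linear_combination (-(3⁻¹ : ℂ)) * h
      | linear_combination (2/3 : ℂ) * h
      | linear_combination (-(2/3 : ℂ)) * h
      | linear_combination (2⁻¹ : ℂ) * h
      | linear_combination (2 : ℂ) * h
      | linear_combination (-(2⁻¹ : ℂ)) * h
      | linear_combination -h
      | (rcases h with h | h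
         · norm_num at h
         · exact h)
      | (rcases h with h | h
         · norm_num at h
         · linear_combination h)
  have c1E : b.repr (φ (b SIdx.H)) SIdx.E = - b.repr (φ (b SIdx.F)) SIdx.H := by
    have h := congrArg (fun w => b.repr w SIdx.E) eq1
    simp [map_add, map_sub, map_smul, map_neg, Finsupp.add_apply, Finsupp.sub_apply,
      Finsupp.smul_apply, Finsupp.neg_apply, Module.Basis.repr_self, Finsupp.single_apply] at h
    first
      | exact h
      | linear_combination h
      | linear_combination (3⁻¹ : ℂ) * h
      | linear_combination (-(3⁻¹ : ℂ)) * h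
      | linear_combination (2/3 : ℂ) * h
      | linear_combination (-(2/3 : ℂ)) * h
      | linear_combination (2⁻¹ : ℂ) * h
      | linear_combination (2 : ℂ) * h
      | linear_combination (-(2⁻¹ : ℂ)) * h
      | linear_combination -h
      | (rcases h with h | h
         · norm_num at h
         · exact h)
      | (rcases h with h | h
         · norm_num at h
         · linear_combination h)
  -- coordinates from eq2
  have c2E : b.repr (φ (b SIdx.E)) SIdx.E = c := by
    have h := congrArg (fun w => b.repr w SIdx.E) eq2
    simp [map_add, map_sub, map_smul, map_neg, Finsupp.add_apply, Finsupp.sub_apply,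
      Finsupp.smul_apply, Finsupp.neg_apply, Module.Basis.repr_self, Finsupp.single_apply] at h
    first
      | exact h
      | linear_combination h
      | linear_combination (3⁻¹ : ℂ) * h
      | linear_combination (-(3⁻¹ : ℂ)) * h
      | linear_combination (2/3 : ℂ) * h
      | linear_combination (-(2/3 : ℂ)) * h
      | linear_combination (2⁻¹ : ℂ) * h
      | linear_combination (2 : ℂ) * h
      | linear_combination (-(2⁻¹ : ℂ)) * h
      | linear_combination -h
      | (rcases h with h | h
         · norm_num at h
         · exact h)
      | (rcases h with h | h
         · norm_num at h
         · linear_combination h)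
  have c2F : b.repr (φ (b SIdx.E)) SIdx.F = 0 := by
    have h := congrArg (fun w => b.repr w SIdx.F) eq2
    simp [map_add, map_sub, map_smul, map_neg, Finsupp.add_apply, Finsupp.sub_apply,
      Finsupp.smul_apply, Finsupp.neg_apply, Module.Basis.repr_self, Finsupp.single_apply] at h
    first
      | exact h
      | linear_combination h
      | linear_combination (3⁻¹ : ℂ) * h
      | linear_combination (-(3⁻¹ : ℂ)) * h
      | linear_combination (2/3 : ℂ) * h
      | linear_combination (-(2/3 : ℂ)) * h
      | linear_combination (2⁻¹ : ℂ) * h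
      | linear_combination (2 : ℂ) * h
      | linear_combination (-(2⁻¹ : ℂ)) * h
      | linear_combination -h
      | (rcases h with h | h
         · norm_num at h
         · exact h)
      | (rcases h with h | h
         · norm_num at h
         · linear_combination h)
  have c2H : b.repr (φ (b SIdx.E)) SIdx.H = 0 := by
    have h := congrArg (fun w => b.repr w SIdx.H) eq2
    rw [c1F] at h
    simp [map_add, map_sub, map_smul, map_neg, Finsupp.add_apply, Finsupp.sub_apply,
      Finsupp.smul_apply, Finsupp.neg_apply, Module.Basis.repr_self, Finsupp.single_apply] at h
    first
      | exact h
      | linear_combination h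
      | linear_combination (3⁻¹ : ℂ) * h
      | linear_combination (-(3⁻¹ : ℂ)) * h
      | linear_combination (2/3 : ℂ) * h
      | linear_combination (-(2/3 : ℂ)) * h
      | linear_combination (2⁻¹ : ℂ) * h
      | linear_combination (2 : ℂ) * h
      | linear_combination (-(2⁻¹ : ℂ)) * h
      | linear_combination -h
      | (rcases h with h | h
         · norm_num at h
         · exact h)
      | (rcases h with h | h
         · norm_num at h
         · linear_combination h)
  have c2Z : b.repr (φ (b SIdx.E)) SIdx.Z = 0 := by
    have h := congrArg (fun w => b.repr w SIdx.Z) eq2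
    simp [map_add, map_sub, map_smul, map_neg, Finsupp.add_apply, Finsupp.sub_apply,
      Finsupp.smul_apply, Finsupp.neg_apply, Module.Basis.repr_self, Finsupp.single_apply] at h
    first
      | exact h
      | linear_combination h
      | linear_combination (3⁻¹ : ℂ) * h
      | linear_combination (-(3⁻¹ : ℂ)) * h
      | linear_combination (2/3 : ℂ) * h
      | linear_combination (-(2/3 : ℂ)) * h
      | linear_combination (2⁻¹ : ℂ) * h
      | linear_combination (2 : ℂ) * h
      | linear_combination (-(2⁻¹ : ℂ)) * h
      | linear_combination -h
      | (rcases h with h | h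
         · norm_num at h
         · exact h)
      | (rcases h with h | h
         · norm_num at h
         · linear_combination h)
  have c2S : ∀ (a d : Fin n) (had : a < d), b.repr (φ (b SIdx.E)) (SIdx.S a d had) = 0 := by
    intro a d had
    have h := congrArg (fun w => b.repr w (SIdx.S a d had)) eq2
    simp [map_add, map_sub, map_smul, map_neg, Finsupp.add_apply, Finsupp.sub_apply,
      Finsupp.smul_apply, Finsupp.neg_apply, Module.Basis.repr_self, Finsupp.single_apply] at h
    first
      | exact h
      | linear_combination h
      | linear_combination (3⁻¹ : ℂ) * h
      | linear_combination (-(3⁻¹ : ℂ)) * h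
      | linear_combination (2/3 : ℂ) * h
      | linear_combination (-(2/3 : ℂ)) * h
      | linear_combination (2⁻¹ : ℂ) * h
      | linear_combination (2 : ℂ) * h
      | linear_combination (-(2⁻¹ : ℂ)) * h
      | linear_combination -h
      | (rcases h with h | h
         · norm_num at h
         · exact h)
      | (rcases h with h | h
         · norm_num at h
         · linear_combination h)
  have hphiE : φ (b SIdx.E) = c • b SIdx.E := by
    apply b.ext_elem; intro u
    have hX := even_repr_X b pE
    have hY := even_repr_Y b pE
    cases u with
    | E => simpa [Module.Basis.repr_self, Finsupp.single_apply] using c2E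
    | F => simpa [Module.Basis.repr_self, Finsupp.single_apply] using c2F
    | H => simpa [Module.Basis.repr_self, Finsupp.single_apply] using c2H
    | Z => simpa [Module.Basis.repr_self, Finsupp.single_apply] using c2Z
    | X i => simpa [Module.Basis.repr_self, Finsupp.single_apply] using hX i
    | Y i => simpa [Module.Basis.repr_self, Finsupp.single_apply] using hY i
    | S a d had => simpa [Module.Basis.repr_self, Finsupp.single_apply] using c2S a d had
    -- coordinates from eq3
  have c3E : b.repr (φ (b SIdx.F)) SIdx.E = 0 := by
    have h := congrArg (fun w => b.repr w SIdx.E) eq3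
    simp [map_add, map_sub, map_smul, map_neg, Finsupp.add_apply, Finsupp.sub_apply,
      Finsupp.smul_apply, Finsupp.neg_apply, Module.Basis.repr_self, Finsupp.single_apply] at h
    first
      | exact h
      | linear_combination h
      | linear_combination (3⁻¹ : ℂ) * h
      | linear_combination (-(3⁻¹ : ℂ)) * h
      | (rcases h with h | h
         · norm_num at h
         · exact h)
  have c3F : b.repr (φ (b SIdx.F)) SIdx.F = c := by
    have h := congrArg (fun w => b.repr w SIdx.F) eq3
    simp [map_add, map_sub, map_smul, map_neg, Finsupp.add_apply, Finsupp.sub_apply,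
      Finsupp.smul_apply, Finsupp.neg_apply, Module.Basis.repr_self, Finsupp.single_apply] at h
    first
      | exact h
      | linear_combination h
      | linear_combination -h
      | linear_combination (2⁻¹ : ℂ) * h
  have c3H : b.repr (φ (b SIdx.F)) SIdx.H = 0 := by
    have h := congrArg (fun w => b.repr w SIdx.H) eq3
    rw [c1E] at h
    simp [map_add, map_sub, map_smul, map_neg, Finsupp.add_apply, Finsupp.sub_apply,
      Finsupp.smul_apply, Finsupp.neg_apply, Module.Basis.repr_self, Finsupp.single_apply] at h
    first
      | exact h
      | linear_combination h
      | linear_combination (2/3 : ℂ) * h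
      | linear_combination (-(2/3 : ℂ)) * h
      | (rcases h with h | h
         · norm_num at h
         · exact h)
  have c3Z : b.repr (φ (b SIdx.F)) SIdx.Z = 0 := by
    have h := congrArg (fun w => b.repr w SIdx.Z) eq3
    simp [map_add, map_sub, map_smul, map_neg, Finsupp.add_apply, Finsupp.sub_apply,
      Finsupp.smul_apply, Finsupp.neg_apply, Module.Basis.repr_self, Finsupp.single_apply] at h
    first
      | exact h
      | linear_combination h
      | linear_combination (2⁻¹ : ℂ) * h
  have c3S : ∀ (a d : Fin n) (had : a < d), b.repr (φ (b SIdx.F)) (SIdx.S a d had) = 0 := by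
    intro a d had
    have h := congrArg (fun w => b.repr w (SIdx.S a d had)) eq3
    simp [map_add, map_sub, map_smul, map_neg, Finsupp.add_apply, Finsupp.sub_apply,
      Finsupp.smul_apply, Finsupp.neg_apply, Module.Basis.repr_self, Finsupp.single_apply] at h
    first
      | exact h
      | linear_combination h
      | linear_combination (2⁻¹ : ℂ) * h
  have hphiF : φ (b SIdx.F) = c • b SIdx.F := by
    apply b.ext_elem; intro u
    have hX := even_repr_X b pF
    have hY := even_repr_Y b pF
    cases u with
    | E => simpa [Module.Basis.repr_self, Finsupp.single_apply] using c3E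
    | F => simpa [Module.Basis.repr_self, Finsupp.single_apply] using c3F
    | H => simpa [Module.Basis.repr_self, Finsupp.single_apply] using c3H
    | Z => simpa [Module.Basis.repr_self, Finsupp.single_apply] using c3Z
    | X i => simpa [Module.Basis.repr_self, Finsupp.single_apply] using hX i
    | Y i => simpa [Module.Basis.repr_self, Finsupp.single_apply] using hY i
    | S a d had => simpa [Module.Basis.repr_self, Finsupp.single_apply] using c3S a d had
  -- φ h = c h
  have c1Z : b.repr (φ (b SIdx.H)) SIdx.Z = 0 := by
    have h := congrArg (fun w => b.repr w SIdx.Z) eq1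
    simp [map_add, map_sub, map_smul, map_neg, Finsupp.add_apply, Finsupp.sub_apply,
      Finsupp.smul_apply, Finsupp.neg_apply, Module.Basis.repr_self, Finsupp.single_apply] at h
    exact h
  have c1S : ∀ (a d : Fin n) (had : a < d), b.repr (φ (b SIdx.H)) (SIdx.S a d had) = 0 := by
    intro a d had
    have h := congrArg (fun w => b.repr w (SIdx.S a d had)) eq1
    simp [map_add, map_sub, map_smul, map_neg, Finsupp.add_apply, Finsupp.sub_apply,
      Finsupp.smul_apply, Finsupp.neg_apply, Module.Basis.repr_self, Finsupp.single_apply] at h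
    exact h
  have hphiH : φ (b SIdx.H) = c • b SIdx.H := by
    apply b.ext_elem; intro u
    have hX := even_repr_X b pH
    have hY := even_repr_Y b pH
    cases u with
    | E => simp [Module.Basis.repr_self, Finsupp.single_apply, c1E, c3H]
    | F => simp [Module.Basis.repr_self, Finsupp.single_apply, c1F, c2H]
    | H => simp [Module.Basis.repr_self, Finsupp.single_apply, ← hc]
    | Z => simpa [Module.Basis.repr_self, Finsupp.single_apply] using c1Z
    | X i => simpa [Module.Basis.repr_self, Finsupp.single_apply] using hX i
    | Y i => simpa [Module.Basis.repr_self, Finsupp.single_apply] using hY i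
    | S a d had => simpa [Module.Basis.repr_self, Finsupp.single_apply] using c1S a d had
  -- odd part
  have hXY : ∀ i : Fin n, φ (b (SIdx.X i)) = c • b (SIdx.X i)
      ∧ φ (b (SIdx.Y i)) = c • b (SIdx.Y i) := by
    intro i
    have h0 := hφ (b SIdx.E) (b (SIdx.Y i))
    rw [hb.lie_e_y, hphiE, smul_lie, hb.lie_e_y] at h0
    have h0' := hφ (b SIdx.F) (b (SIdx.X i))
    rw [hb.lie_f_x, hphiF, smul_lie, hb.lie_f_x] at h0'
    have e3 : ⁅b SIdx.H, φ (b (SIdx.Y i))⁆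
        = -((2 : ℂ) • φ (b (SIdx.Y i))) + c • b (SIdx.Y i) := by
      have h1 := hφ (b SIdx.H) (b (SIdx.Y i))
      rw [hb.lie_h_y, map_neg, hphiH, smul_lie, hb.lie_h_y] at h1
      linear_combination (norm := module) (-2 : ℂ) • h1
    have e1' : ⁅b SIdx.E, φ (b (SIdx.Y i))⁆
        = (2 : ℂ) • φ (b (SIdx.X i)) - c • b (SIdx.X i) := by
      linear_combination (norm := module) (-2 : ℂ) • h0
    have e2' : ⁅b SIdx.F, φ (b (SIdx.X i))⁆
        = (2 : ℂ) • φ (b (SIdx.Y i)) - c • b (SIdx.Y i) := by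
      linear_combination (norm := module) (-2 : ℂ) • h0'
    have e4 : ⁅b SIdx.F, ⁅b SIdx.E, φ (b (SIdx.Y i))⁆⁆
        = (4 : ℂ) • φ (b (SIdx.Y i)) - (3 * c) • b (SIdx.Y i) := by
      rw [e1', lie_sub, lie_smul, lie_smul, hb.lie_f_x, e2']
      module
    have e5 := oddR2 b hb (hodd _ (memY b i))
    have e6 : ((5 : ℂ)/2) • φ (b (SIdx.Y i)) = ((5 : ℂ)/2) • (c • b (SIdx.Y i)) := by
      linear_combination (norm := module) (-1 : ℂ) • e4 + e5 + (-(2⁻¹ : ℂ)) • e3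
    have hY : φ (b (SIdx.Y i)) = c • b (SIdx.Y i) :=
      smul_right_injective L (by norm_num : ((5 : ℂ)/2) ≠ 0) e6
    refine ⟨?_, hY⟩
    rw [hY, lie_smul, hb.lie_e_y] at h0
    linear_combination (norm := module) h0
  -- φ z = c z
  have hZ : φ (b SIdx.Z) = c • b SIdx.Z := by
    have i0 : Fin n := ⟨0, by omega⟩
    have h0 := hφ (b (SIdx.X i0)) (b (SIdx.Y i0))
    rw [hb.lie_x_y, (hXY i0).1, (hXY i0).2, smul_lie, lie_smul, hb.lie_x_y, map_smul] at h0
    have hkd : kd i0 i0 = 1 := if_pos rfl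
    rw [hkd] at h0
    linear_combination (norm := module) h0
  -- step 6a
  have key6a : ∀ (j k : Fin n) (hjk : j < k), ∃ d : ℂ,
      φ (b (SIdx.S j k hjk)) = d • b SIdx.Z + c • b (SIdx.S j k hjk) := by
    intro j k hjk
    have pS : φ (b (SIdx.S j k hjk)) ∈ span ℂ (evenSet b) := heven _ (memS b hjk)
    set v := φ (b (SIdx.S j k hjk)) - c • b (SIdx.S j k hjk) with hv
    have pv : v ∈ span ℂ (evenSet b) := sub_mem pS (smul_mem _ _ (memS b hjk))
    have hvx : ∀ i, ⁅v, b (SIdx.X i)⁆ = 0 := by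
      intro i
      have h0 := hφ (b (SIdx.S j k hjk)) (b (SIdx.X i))
      rw [lie_S_x b hb hjk i] at h0
      simp only [map_sub, map_smul, (hXY j).1, (hXY k).1, (hXY i).1, lie_smul] at h0
      rw [lie_S_x b hb hjk i] at h0
      rw [hv, sub_lie, smul_lie, lie_S_x b hb hjk i]
      linear_combination (norm := module) (-2 : ℂ) • h0
    have hvy : ∀ i, ⁅v, b (SIdx.Y i)⁆ = 0 := by
      intro i
      have h0 := hφ (b (SIdx.S j k hjk)) (b (SIdx.Y i))
      rw [lie_S_y b hb hjk i] at h0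
      simp only [map_sub, map_smul, (hXY j).2, (hXY k).2, (hXY i).2, lie_smul] at h0
      rw [lie_S_y b hb hjk i] at h0
      rw [hv, sub_lie, smul_lie, lie_S_y b hb hjk i]
      linear_combination (norm := module) (-2 : ℂ) • h0
    have cvF : b.repr v SIdx.F = 0 := by
      have h1 := evXcoordY b hb pv j
      rw [hvx j] at h1
      simpa using h1.symm
    have cvE : b.repr v SIdx.E = 0 := by
      have h1 := evYcoordX b hb pv j
      rw [hvy j] at h1
      simpa using h1.symm
    have cvH : b.repr v SIdx.H = 0 := by
      have h1 := evXcoordX b hb pv j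
      rw [hvx j] at h1
      simpa using h1.symm
    have cvS : ∀ (a d : Fin n) (had : a < d), b.repr v (SIdx.S a d had) = 0 := by
      intro a d had
      have h1 := evXcoordXS b hb pv a d had
      rw [hvx d] at h1
      simpa using h1.symm
    refine ⟨b.repr v SIdx.Z, ?_⟩
    have hveq : v = (b.repr v SIdx.Z) • b SIdx.Z := by
      apply b.ext_elem; intro u
      cases u with
      | E => simp [cvE, Module.Basis.repr_self, Finsupp.single_apply]
      | F => simp [cvF, Module.Basis.repr_self, Finsupp.single_apply]
      | H => simp [cvH, Module.Basis.repr_self, Finsupp.single_apply]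
      | Z => simp [Module.Basis.repr_self, Finsupp.single_apply]
      | X i => simp [even_repr_X b pv i, Module.Basis.repr_self, Finsupp.single_apply]
      | Y i => simp [even_repr_Y b pv i, Module.Basis.repr_self, Finsupp.single_apply]
      | S a d had => simp [cvS a d had, Module.Basis.repr_self, Finsupp.single_apply]
    linear_combination (norm := module) hveq
  -- step 6b
  have keysg : ∀ j k : Fin n, j ≠ k → ∃ d : ℂ,
      φ (sg b j k) = d • b SIdx.Z + c • sg b j k := by
    intro j k hne
    rcases lt_or_gt_of_ne hne with h | h
    · rw [sg_eq b h]; exact key6a j k h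
    · obtain ⟨d, hd⟩ := key6a k j h
      refine ⟨-d, ?_⟩
      rw [sg_neg b h, map_neg, hd]
      module
  -- third index
  have third : ∀ j k : Fin n, ∃ m : Fin n, m ≠ j ∧ m ≠ k := by
    intro j k
    by_contra hcon
    push_neg at hcon
    have hsub : (Finset.univ : Finset (Fin n)) ⊆ {j, k} := by
      intro m _
      rcases eq_or_ne m j with rfl | hm
      · simp
      · simp [hcon m hm]
    have h1 := Finset.card_le_card hsub
    have h2 : ({j, k} : Finset (Fin n)).card ≤ 2 :=
      (Finset.card_insert_le _ _).trans (by simp)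
    simp [Finset.card_univ] at h1
    omega
  -- step 6c
  have keyS : ∀ (j k : Fin n) (hjk : j < k),
      φ (b (SIdx.S j k hjk)) = c • b (SIdx.S j k hjk) := by
    intro j k hjk
    obtain ⟨m, hmj, hmk⟩ := third j k
    obtain ⟨d1, h1⟩ := keysg j m (Ne.symm hmj)
    obtain ⟨d2, h2⟩ := keysg m k hmk
    have hbr : ⁅sg b j m, sg b m k⁆ = sg b j k := by
      rw [hb.lie_s_s j m m k]
      have k1 : kd m m = 1 := if_pos rfl
      have k2 : kd j k = (0 : ℂ) := if_neg (ne_of_lt hjk)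
      have k3 : kd k m = (0 : ℂ) := if_neg (Ne.symm hmk)
      have k4 : kd m j = (0 : ℂ) := if_neg hmj
      rw [k1, k2, k3, k4, one_smul, zero_smul, zero_smul, zero_smul, add_zero, add_zero,
        add_zero]
    have h0 := hφ (sg b j m) (sg b m k)
    rw [hbr, h1, h2, add_lie, lie_add, smul_lie, smul_lie, lie_smul, lie_smul,
      lie_z_sg b hb, hbr] at h0
    have hz2 : ⁅sg b j m, b SIdx.Z⁆ = 0 := by
      rw [← lie_skew, lie_z_sg b hb, neg_zero]
    rw [hz2] at h0
    rw [← sg_eq b hjk]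
    linear_combination (norm := module) h0
  -- conclusion
  refine ⟨c, ?_⟩
  apply b.ext
  intro u
  simp only [LinearMap.smul_apply, LinearMap.id_apply]
  cases u with
  | E => exact hphiE
  | F => exact hphiF
  | H => exact hphiH
  | Z => exact hZ
  | X i => exact (hXY i).1
  | Y i => exact (hXY i).2
  | S j k h => exact keyS j k h
end
end

section
/- Let n ≥ 3 and let φ_1 be a 1/2-derivation of the Schrödinger algebra S_n which reverses the Z/2Z-grading, i.e. φ_1((S_n)_0) ⊆ (S_n)_1 and φ_1((S_n)_1) ⊆ (S_n)_0, where (S_n)_0 is the span of {e, f, h, z, s_{kl} (1 ≤ k < l ≤ n)} and (S_n)_1 is the span of {x_i, y_i (1 ≤ i ≤ n)}. Then φ_1 = 0. -/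
noncomputable section

open Submodule

variable {n : ℕ} {L : Type*} [LieRing L] [LieAlgebra ℂ L]

variable {b : Module.Basis (SIdx n) ℂ L}

lemma sg_of_lt (b : Module.Basis (SIdx n) ℂ L) {j k : Fin n} (h : j < k) :
    sg b j k = b (.S j k h) := dif_pos h

lemma basis_cases (b : Module.Basis (SIdx n) ℂ L) {P : L → Prop}
    (hgen : ∀ u, P (b u)) (h0 : P 0)
    (hadd : ∀ x y, P x → P y → P (x + y))
    (hsmul : ∀ (c : ℂ) (x : L), P x → P (c • x)) (x : L) : P x := by
  have hx : x ∈ span ℂ (Set.range ⇑b) := by rw [b.span_eq]; trivial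
  induction hx using span_induction with
  | mem v hv => obtain ⟨u, rfl⟩ := hv; exact hgen u
  | zero => exact h0
  | add a c _ _ pa pc => exact hadd a c pa pc
  | smul c a _ pa => exact hsmul c a pa

-- basis-level bracket facts obtained from `IsSchrodinger` by antisymmetry
lemma lie_e_H (hb : IsSchrodinger b) : ⁅b .E, b .H⁆ = -((2:ℂ) • b .E) := by
  rw [← lie_skew, hb.lie_h_e]
lemma lie_e_Z (hb : IsSchrodinger b) : ⁅b .E, b .Z⁆ = 0 := by
  rw [← lie_skew, hb.lie_z, neg_zero]
lemma lie_e_S (hb : IsSchrodinger b) (j k : Fin n) (h : j < k) :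
    ⁅b .E, b (.S j k h)⁆ = 0 := by rw [← sg_of_lt b h]; exact hb.lie_e_s j k
lemma lie_f_E (hb : IsSchrodinger b) : ⁅b .F, b .E⁆ = -(b .H) := by
  rw [← lie_skew, hb.lie_e_f]
lemma lie_f_Z (hb : IsSchrodinger b) : ⁅b .F, b .Z⁆ = 0 := by
  rw [← lie_skew, hb.lie_z, neg_zero]
lemma lie_f_S (hb : IsSchrodinger b) (j k : Fin n) (h : j < k) :
    ⁅b .F, b (.S j k h)⁆ = 0 := by rw [← sg_of_lt b h]; exact hb.lie_f_s j k
lemma lie_h_F (hb : IsSchrodinger b) : ⁅b .H, b .F⁆ = -((2:ℂ) • b .F) := by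
  rw [← lie_skew, hb.lie_f_h]
lemma lie_h_Z (hb : IsSchrodinger b) : ⁅b .H, b .Z⁆ = 0 := by
  rw [← lie_skew, hb.lie_z, neg_zero]
lemma lie_h_S (hb : IsSchrodinger b) (j k : Fin n) (h : j < k) :
    ⁅b .H, b (.S j k h)⁆ = 0 := by rw [← sg_of_lt b h]; exact hb.lie_h_s j k
lemma lie_y_x (hb : IsSchrodinger b) (j i : Fin n) :
    ⁅b (.Y j), b (.X i)⁆ = -(kd i j • b .Z) := by rw [← lie_skew, hb.lie_x_y]
lemma lie_S_x (hb : IsSchrodinger b) (j k : Fin n) (h : j < k) (i : Fin n) :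
    ⁅b (.S j k h), b (.X i)⁆ = kd k i • b (.X j) - kd j i • b (.X k) := by
  rw [← sg_of_lt b h]; exact hb.lie_s_x j k i
lemma lie_S_y (hb : IsSchrodinger b) (j k : Fin n) (h : j < k) (i : Fin n) :
    ⁅b (.S j k h), b (.Y i)⁆ = kd k i • b (.Y j) - kd j i • b (.Y k) := by
  rw [← sg_of_lt b h]; exact hb.lie_s_y j k i

lemma z_lie (hb : IsSchrodinger b) (w : L) : ⁅b .Z, w⁆ = 0 := by
  classical
  induction w using basis_cases b with
  | hgen u => exact hb.lie_z u
  | h0 => simp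
  | hadd x y hx hy => rw [lie_add, hx, hy, add_zero]
  | hsmul c x hx => rw [lie_smul, hx, smul_zero]

def hcoef {n : ℕ} : SIdx n → ℂ
  | .E => 2
  | .F => -2
  | .H => 0
  | .Z => 0
  | .X _ => 1
  | .Y _ => -1
  | .S _ _ _ => 0

-- universal coordinate formulas for the adjoint actions
lemma repr_lie_h (hb : IsSchrodinger b) (w : L) (u : SIdx n) :
    b.repr ⁅b .H, w⁆ u = hcoef u * b.repr w u := by
  classical
  induction w using basis_cases b with
  | h0 => simp
  | hadd x y hx hy =>
      rw [lie_add, map_add, Finsupp.add_apply, hx, hy, map_add, Finsupp.add_apply]; ring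
  | hsmul c x hx =>
      rw [lie_smul, map_smul, Finsupp.smul_apply, hx, map_smul, Finsupp.smul_apply,
        smul_eq_mul, smul_eq_mul]; ring
  | hgen v =>
      cases v with
      | E => rw [hb.lie_h_e]; cases u <;> simp [hcoef, Module.Basis.repr_self, Finsupp.single_apply]
      | F => rw [lie_h_F hb]; cases u <;> simp [hcoef, Module.Basis.repr_self, Finsupp.single_apply]
      | H => rw [lie_self]; cases u <;> simp [hcoef, Module.Basis.repr_self, Finsupp.single_apply]
      | Z => rw [lie_h_Z hb]; cases u <;> simp [hcoef, Module.Basis.repr_self, Finsupp.single_apply]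
      | X j => rw [hb.lie_h_x]; cases u <;> simp [hcoef, Module.Basis.repr_self, Finsupp.single_apply]
      | Y j =>
          rw [hb.lie_h_y]
          cases u <;> simp [hcoef, Module.Basis.repr_self, Finsupp.single_apply] <;>
            split_ifs <;> ring
      | S j k h => rw [lie_h_S hb]; cases u <;> simp [hcoef, Module.Basis.repr_self, Finsupp.single_apply]

lemma repr_lieE_X (hb : IsSchrodinger b) (w : L) (i : Fin n) :
    b.repr ⁅b .E, w⁆ (.X i) = b.repr w (.Y i) := by
  classical
  induction w using basis_cases b with
  | h0 => simp
  | hadd x y hx hy =>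
      rw [lie_add, map_add, Finsupp.add_apply, hx, hy, map_add, Finsupp.add_apply]
  | hsmul c x hx =>
      rw [lie_smul, map_smul, Finsupp.smul_apply, hx, map_smul, Finsupp.smul_apply]
  | hgen v =>
      cases v with
      | E => rw [lie_self]; simp [Module.Basis.repr_self, Finsupp.single_apply]
      | F => rw [hb.lie_e_f]; simp [Module.Basis.repr_self, Finsupp.single_apply]
      | H => rw [lie_e_H hb]; simp [Module.Basis.repr_self, Finsupp.single_apply]
      | Z => rw [lie_e_Z hb]; simp [Module.Basis.repr_self, Finsupp.single_apply]
      | X j => rw [hb.lie_e_x]; simp [Module.Basis.repr_self, Finsupp.single_apply]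
      | Y j => rw [hb.lie_e_y]; simp [Module.Basis.repr_self, Finsupp.single_apply]
      | S j k h => rw [lie_e_S hb]; simp [Module.Basis.repr_self, Finsupp.single_apply]

lemma repr_lieE_Y (hb : IsSchrodinger b) (w : L) (i : Fin n) :
    b.repr ⁅b .E, w⁆ (.Y i) = 0 := by
  classical
  induction w using basis_cases b with
  | h0 => simp
  | hadd x y hx hy => rw [lie_add, map_add, Finsupp.add_apply, hx, hy, add_zero]
  | hsmul c x hx => rw [lie_smul, map_smul, Finsupp.smul_apply, hx, smul_zero]
  | hgen v =>
      cases v with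
      | E => rw [lie_self]; simp
      | F => rw [hb.lie_e_f]; simp [Module.Basis.repr_self, Finsupp.single_apply]
      | H => rw [lie_e_H hb]; simp [Module.Basis.repr_self, Finsupp.single_apply]
      | Z => rw [lie_e_Z hb]; simp
      | X j => rw [hb.lie_e_x]; simp
      | Y j => rw [hb.lie_e_y]; simp [Module.Basis.repr_self, Finsupp.single_apply]
      | S j k h => rw [lie_e_S hb]; simp

lemma repr_lieE_E (hb : IsSchrodinger b) (w : L) :
    b.repr ⁅b .E, w⁆ .E = -2 * b.repr w .H := by
  classical
  induction w using basis_cases b with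
  | h0 => simp
  | hadd x y hx hy =>
      rw [lie_add, map_add, Finsupp.add_apply, hx, hy, map_add, Finsupp.add_apply]; ring
  | hsmul c x hx =>
      rw [lie_smul, map_smul, Finsupp.smul_apply, hx, map_smul, Finsupp.smul_apply,
        smul_eq_mul, smul_eq_mul]; ring
  | hgen v =>
      cases v with
      | E => rw [lie_self]; simp [Module.Basis.repr_self, Finsupp.single_apply]
      | F => rw [hb.lie_e_f]; simp [Module.Basis.repr_self, Finsupp.single_apply]
      | H => rw [lie_e_H hb]; simp [Module.Basis.repr_self, Finsupp.single_apply]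
      | Z => rw [lie_e_Z hb]; simp [Module.Basis.repr_self, Finsupp.single_apply]
      | X j => rw [hb.lie_e_x]; simp [Module.Basis.repr_self, Finsupp.single_apply]
      | Y j => rw [hb.lie_e_y]; simp [Module.Basis.repr_self, Finsupp.single_apply]
      | S j k h => rw [lie_e_S hb]; simp [Module.Basis.repr_self, Finsupp.single_apply]

lemma repr_lieF_X (hb : IsSchrodinger b) (w : L) (i : Fin n) :
    b.repr ⁅b .F, w⁆ (.X i) = 0 := by
  classical
  induction w using basis_cases b with
  | h0 => simp
  | hadd x y hx hy => rw [lie_add, map_add, Finsupp.add_apply, hx, hy, add_zero]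
  | hsmul c x hx => rw [lie_smul, map_smul, Finsupp.smul_apply, hx, smul_zero]
  | hgen v =>
      cases v with
      | E => rw [lie_f_E hb]; simp [Module.Basis.repr_self, Finsupp.single_apply]
      | F => rw [lie_self]; simp
      | H => rw [hb.lie_f_h]; simp [Module.Basis.repr_self, Finsupp.single_apply]
      | Z => rw [lie_f_Z hb]; simp
      | X j => rw [hb.lie_f_x]; simp [Module.Basis.repr_self, Finsupp.single_apply]
      | Y j => rw [hb.lie_f_y]; simp
      | S j k h => rw [lie_f_S hb]; simp

lemma repr_lieF_Y (hb : IsSchrodinger b) (w : L) (i : Fin n) :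
    b.repr ⁅b .F, w⁆ (.Y i) = b.repr w (.X i) := by
  classical
  induction w using basis_cases b with
  | h0 => simp
  | hadd x y hx hy =>
      rw [lie_add, map_add, Finsupp.add_apply, hx, hy, map_add, Finsupp.add_apply]
  | hsmul c x hx =>
      rw [lie_smul, map_smul, Finsupp.smul_apply, hx, map_smul, Finsupp.smul_apply]
  | hgen v =>
      cases v with
      | E => rw [lie_f_E hb]; simp [Module.Basis.repr_self, Finsupp.single_apply]
      | F => rw [lie_self]; simp [Module.Basis.repr_self, Finsupp.single_apply]
      | H => rw [hb.lie_f_h]; simp [Module.Basis.repr_self, Finsupp.single_apply]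
      | Z => rw [lie_f_Z hb]; simp [Module.Basis.repr_self, Finsupp.single_apply]
      | X j => rw [hb.lie_f_x]; simp [Module.Basis.repr_self, Finsupp.single_apply]
      | Y j => rw [hb.lie_f_y]; simp [Module.Basis.repr_self, Finsupp.single_apply]
      | S j k h => rw [lie_f_S hb]; simp [Module.Basis.repr_self, Finsupp.single_apply]

lemma repr_lieF_F (hb : IsSchrodinger b) (w : L) :
    b.repr ⁅b .F, w⁆ .F = 2 * b.repr w .H := by
  classical
  induction w using basis_cases b with
  | h0 => simp
  | hadd x y hx hy =>
      rw [lie_add, map_add, Finsupp.add_apply, hx, hy, map_add, Finsupp.add_apply]; ring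
  | hsmul c x hx =>
      rw [lie_smul, map_smul, Finsupp.smul_apply, hx, map_smul, Finsupp.smul_apply,
        smul_eq_mul, smul_eq_mul]; ring
  | hgen v =>
      cases v with
      | E => rw [lie_f_E hb]; simp [Module.Basis.repr_self, Finsupp.single_apply]
      | F => rw [lie_self]; simp [Module.Basis.repr_self, Finsupp.single_apply]
      | H => rw [hb.lie_f_h]; simp [Module.Basis.repr_self, Finsupp.single_apply]
      | Z => rw [lie_f_Z hb]; simp [Module.Basis.repr_self, Finsupp.single_apply]
      | X j => rw [hb.lie_f_x]; simp [Module.Basis.repr_self, Finsupp.single_apply]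
      | Y j => rw [hb.lie_f_y]; simp [Module.Basis.repr_self, Finsupp.single_apply]
      | S j k h => rw [lie_f_S hb]; simp [Module.Basis.repr_self, Finsupp.single_apply]

lemma repr_lieX_Z (hb : IsSchrodinger b) (w : L) (i : Fin n) :
    b.repr ⁅w, b (.X i)⁆ .Z = -(b.repr w (.Y i)) := by
  classical
  induction w using basis_cases b with
  | h0 => simp
  | hadd x y hx hy =>
      rw [add_lie, map_add, Finsupp.add_apply, hx, hy, map_add, Finsupp.add_apply]; ring
  | hsmul c x hx =>
      rw [smul_lie, map_smul, Finsupp.smul_apply, hx, map_smul, Finsupp.smul_apply,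
        smul_eq_mul, smul_eq_mul]; ring
  | hgen v =>
      cases v with
      | E => rw [hb.lie_e_x]; simp [Module.Basis.repr_self, Finsupp.single_apply]
      | F => rw [hb.lie_f_x]; simp [Module.Basis.repr_self, Finsupp.single_apply]
      | H => rw [hb.lie_h_x]; simp [Module.Basis.repr_self, Finsupp.single_apply]
      | Z => rw [hb.lie_z]; simp [Module.Basis.repr_self, Finsupp.single_apply]
      | X j => rw [hb.lie_x_x]; simp [Module.Basis.repr_self, Finsupp.single_apply]
      | Y j =>
          rw [lie_y_x hb]
          rcases eq_or_ne i j with rfl | hij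
          · simp [Module.Basis.repr_self, Finsupp.single_apply, kd]
          · simp [Module.Basis.repr_self, Finsupp.single_apply, kd, hij, hij.symm]
      | S j k h =>
          rw [lie_S_x hb j k h]
          simp [Module.Basis.repr_self, Finsupp.single_apply]

lemma repr_lieY_Z (hb : IsSchrodinger b) (w : L) (i : Fin n) :
    b.repr ⁅w, b (.Y i)⁆ .Z = b.repr w (.X i) := by
  classical
  induction w using basis_cases b with
  | h0 => simp
  | hadd x y hx hy =>
      rw [add_lie, map_add, Finsupp.add_apply, hx, hy, map_add, Finsupp.add_apply]
  | hsmul c x hx =>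
      rw [smul_lie, map_smul, Finsupp.smul_apply, hx, map_smul, Finsupp.smul_apply]
  | hgen v =>
      cases v with
      | E => rw [hb.lie_e_y]; simp [Module.Basis.repr_self, Finsupp.single_apply]
      | F => rw [hb.lie_f_y]; simp [Module.Basis.repr_self, Finsupp.single_apply]
      | H => rw [hb.lie_h_y]; simp [Module.Basis.repr_self, Finsupp.single_apply]
      | Z => rw [hb.lie_z]; simp [Module.Basis.repr_self, Finsupp.single_apply]
      | X j =>
          rw [hb.lie_x_y]
          rcases eq_or_ne i j with rfl | hij
          · simp [Module.Basis.repr_self, Finsupp.single_apply, kd]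
          · simp [Module.Basis.repr_self, Finsupp.single_apply, kd, hij, hij.symm]
      | Y j => rw [hb.lie_y_y]; simp [Module.Basis.repr_self, Finsupp.single_apply]
      | S j k h =>
          rw [lie_S_y hb j k h]
          simp [Module.Basis.repr_self, Finsupp.single_apply]

lemma odd_repr {w : L} (hw : w ∈ span ℂ (oddSet b)) (u : SIdx n)
    (hu : ∀ i, u ≠ .X i ∧ u ≠ .Y i) : b.repr w u = 0 := by
  classical
  induction hw using span_induction with
  | mem v hv =>
      obtain ⟨i, rfl | rfl⟩ := hv
      · rw [b.repr_self, Finsupp.single_eq_of_ne ((hu i).1)]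
      · rw [b.repr_self, Finsupp.single_eq_of_ne ((hu i).2)]
  | zero => simp
  | add x y _ _ hx hy => rw [map_add, Finsupp.add_apply, hx, hy, add_zero]
  | smul c x _ hx => rw [map_smul, Finsupp.smul_apply, hx, smul_zero]

lemma even_repr {w : L} (hw : w ∈ span ℂ (evenSet b)) (u : SIdx n)
    (hu : (u ≠ SIdx.E ∧ u ≠ SIdx.F ∧ u ≠ SIdx.H ∧ u ≠ SIdx.Z) ∧
      ∀ (j k : Fin n) (h : j < k), u ≠ .S j k h) : b.repr w u = 0 := by
  induction hw using span_induction with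
  | mem v hv =>
      obtain rfl | rfl | rfl | rfl | ⟨j, k, h, rfl⟩ := hv
      · rw [b.repr_self, Finsupp.single_eq_of_ne ((hu.1.1))]
      · rw [b.repr_self, Finsupp.single_eq_of_ne ((hu.1.2.1))]
      · rw [b.repr_self, Finsupp.single_eq_of_ne ((hu.1.2.2.1))]
      · rw [b.repr_self, Finsupp.single_eq_of_ne ((hu.1.2.2.2))]
      · rw [b.repr_self, Finsupp.single_eq_of_ne ((hu.2 j k h))]
  | zero => simp
  | add x y _ _ hx hy => rw [map_add, Finsupp.add_apply, hx, hy, add_zero]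
  | smul c x _ hx => rw [map_smul, Finsupp.smul_apply, hx, smul_zero]

lemma odd_eq_zero {w : L} (hw : w ∈ span ℂ (oddSet b))
    (hx : ∀ i, b.repr w (.X i) = 0) (hy : ∀ i, b.repr w (.Y i) = 0) : w = 0 := by
  have h0 : b.repr w = 0 := by
    ext u
    simp only [Finsupp.coe_zero, Pi.zero_apply]
    cases u with
    | X i => exact hx i
    | Y i => exact hy i
    | E => exact odd_repr hw _ (fun i => ⟨by simp, by simp⟩)
    | F => exact odd_repr hw _ (fun i => ⟨by simp, by simp⟩)
    | H => exact odd_repr hw _ (fun i => ⟨by simp, by simp⟩)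
    | Z => exact odd_repr hw _ (fun i => ⟨by simp, by simp⟩)
    | S j k h => exact odd_repr hw _ (fun i => ⟨by simp, by simp⟩)
  exact b.repr.map_eq_zero_iff.mp h0

lemma even_eq_zero {w : L} (hw : w ∈ span ℂ (evenSet b))
    (hE : b.repr w .E = 0) (hF : b.repr w .F = 0) (hH : b.repr w .H = 0)
    (hZ : b.repr w .Z = 0)
    (hS : ∀ (j k : Fin n) (h : j < k), b.repr w (.S j k h) = 0) : w = 0 := by
  have h0 : b.repr w = 0 := by
    ext u
    simp only [Finsupp.coe_zero, Pi.zero_apply]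
    cases u with
    | E => exact hE
    | F => exact hF
    | H => exact hH
    | Z => exact hZ
    | S j k h => exact hS j k h
    | X i => exact even_repr hw _ ⟨⟨by simp, by simp, by simp, by simp⟩, by simp⟩
    | Y i => exact even_repr hw _ ⟨⟨by simp, by simp, by simp, by simp⟩, by simp⟩
  exact b.repr.map_eq_zero_iff.mp h0

/-- For `n ≥ 3`, every `1/2`-derivation of the Schrödinger
algebra `S_n` reversing the `ℤ/2ℤ`-grading is zero. -/

theorem odd_half_derivation_is_zero (n : ℕ) (hn : 3 ≤ n)
    (L : Type*) [LieRing L] [LieAlgebra ℂ L]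
    (b : Module.Basis (SIdx n) ℂ L) (hb : IsSchrodinger b)
    (φ : L →ₗ[ℂ] L) (hφ : IsHalfDeriv φ)
    (heven : ∀ x ∈ span ℂ (evenSet b), φ x ∈ span ℂ (oddSet b))
    (hodd : ∀ x ∈ span ℂ (oddSet b), φ x ∈ span ℂ (evenSet b)) :
    φ = 0 := by
  have mE : b .E ∈ span ℂ (evenSet b) := subset_span (Or.inl rfl)
  have mF : b .F ∈ span ℂ (evenSet b) := subset_span (Or.inr (Or.inl rfl))
  have mH : b .H ∈ span ℂ (evenSet b) := subset_span (Or.inr (Or.inr (Or.inl rfl)))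
  have mZ : b .Z ∈ span ℂ (evenSet b) := subset_span (Or.inr (Or.inr (Or.inr (Or.inl rfl))))
  have mS : ∀ (j k : Fin n) (h : j < k), b (.S j k h) ∈ span ℂ (evenSet b) :=
    fun j k h => subset_span (Or.inr (Or.inr (Or.inr (Or.inr ⟨j, k, h, rfl⟩))))
  have mX : ∀ i, b (.X i) ∈ span ℂ (oddSet b) := fun i => subset_span ⟨i, Or.inl rfl⟩
  have mY : ∀ i, b (.Y i) ∈ span ℂ (oddSet b) := fun i => subset_span ⟨i, Or.inr rfl⟩
  have oE := heven _ mE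
  have oF := heven _ mF
  have oH := heven _ mH
  have oZ := heven _ mZ
  have oS := fun (j k : Fin n) (h : j < k) => heven _ (mS j k h)
  have eX := fun i => hodd _ (mX i)
  have eY := fun i => hodd _ (mY i)
  -- Step 1 : φ z = 0
  have hφZ : φ (b .Z) = 0 := by
    refine odd_eq_zero oZ ?_ ?_
    · intro i
      have h1 := hφ (b .Z) (b (.Y i))
      rw [hb.lie_z, map_zero, z_lie hb] at h1
      have h2 := congrArg (fun t => b.repr t SIdx.Z) h1
      simp only [map_zero, map_smul, map_add, Finsupp.coe_zero, Pi.zero_apply,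
        Finsupp.smul_apply, Finsupp.add_apply, smul_eq_mul,
        repr_lieY_Z hb] at h2
      linear_combination (-2 : ℂ) * h2
    · intro i
      have h1 := hφ (b .Z) (b (.X i))
      rw [hb.lie_z, map_zero, z_lie hb] at h1
      have h2 := congrArg (fun t => b.repr t SIdx.Z) h1
      simp only [map_zero, map_smul, map_add, Finsupp.coe_zero, Pi.zero_apply,
        Finsupp.smul_apply, Finsupp.add_apply, smul_eq_mul,
        repr_lieX_Z hb] at h2
      linear_combination (2 : ℂ) * h2
  -- Step 2 : φ e = φ f = φ h = 0
  have keyEFH : ∀ i : Fin n,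
      b.repr (φ (b .E)) (.X i) = 0 ∧ b.repr (φ (b .E)) (.Y i) = 0 ∧
      b.repr (φ (b .F)) (.X i) = 0 ∧ b.repr (φ (b .F)) (.Y i) = 0 ∧
      b.repr (φ (b .H)) (.X i) = 0 ∧ b.repr (φ (b .H)) (.Y i) = 0 := by
    intro i
    have heq1 := hφ (b .H) (b .E)
    rw [hb.lie_h_e, map_smul, ← lie_skew (φ (b .H)) (b .E)] at heq1
    -- heq1 : 2 • φ e = 2⁻¹ • (-⁅e, φ h⁆ + ⁅h, φ e⁆)
    have e1X := congrArg (fun t => b.repr t (SIdx.X i)) heq1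
    have e1Y := congrArg (fun t => b.repr t (SIdx.Y i)) heq1
    simp only [map_smul, map_add, map_neg, Finsupp.smul_apply, Finsupp.add_apply,
      Finsupp.neg_apply, smul_eq_mul, repr_lie_h hb, repr_lieE_X hb, repr_lieE_Y hb,
      hcoef] at e1X e1Y
    have heq2 := hφ (b .F) (b .H)
    rw [hb.lie_f_h, map_smul, ← lie_skew (φ (b .F)) (b .H)] at heq2
    -- heq2 : 2 • φ f = 2⁻¹ • (-⁅h, φ f⁆ + ⁅f, φ h⁆)
    have e2X := congrArg (fun t => b.repr t (SIdx.X i)) heq2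
    have e2Y := congrArg (fun t => b.repr t (SIdx.Y i)) heq2
    simp only [map_smul, map_add, map_neg, Finsupp.smul_apply, Finsupp.add_apply,
      Finsupp.neg_apply, smul_eq_mul, repr_lie_h hb, repr_lieF_X hb, repr_lieF_Y hb,
      hcoef] at e2X e2Y
    have heq3 := hφ (b .E) (b .F)
    rw [hb.lie_e_f, ← lie_skew (φ (b .E)) (b .F)] at heq3
    -- heq3 : φ h = 2⁻¹ • (-⁅f, φ e⁆ + ⁅e, φ f⁆)
    have e3X := congrArg (fun t => b.repr t (SIdx.X i)) heq3
    have e3Y := congrArg (fun t => b.repr t (SIdx.Y i)) heq3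
    simp only [map_smul, map_add, map_neg, Finsupp.smul_apply, Finsupp.add_apply,
      Finsupp.neg_apply, smul_eq_mul, repr_lieE_X hb, repr_lieE_Y hb, repr_lieF_X hb,
      repr_lieF_Y hb] at e3X e3Y
    have hq : b.repr (φ (b .F)) (.Y i) = 0 := by
      linear_combination (4/5 : ℂ) * e2Y + (2/5 : ℂ) * e3X
    have ha : b.repr (φ (b .H)) (.X i) = 0 := by
      linear_combination e3X + (2⁻¹ : ℂ) * hq
    have hc : b.repr (φ (b .E)) (.X i) = 0 := by
      linear_combination (4/5 : ℂ) * e1X + (-2/5 : ℂ) * e3Y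
    have hbb : b.repr (φ (b .H)) (.Y i) = 0 := by
      linear_combination e3Y - (2⁻¹ : ℂ) * hc
    have hd : b.repr (φ (b .E)) (.Y i) = 0 := by
      linear_combination (2/5 : ℂ) * e1Y
    have hp : b.repr (φ (b .F)) (.X i) = 0 := by
      linear_combination (2/5 : ℂ) * e2X
    exact ⟨hc, hd, hp, hq, ha, hbb⟩
  have hφE : φ (b .E) = 0 :=
    odd_eq_zero oE (fun i => (keyEFH i).1) (fun i => (keyEFH i).2.1)
  have hφF : φ (b .F) = 0 :=
    odd_eq_zero oF (fun i => (keyEFH i).2.2.1) (fun i => (keyEFH i).2.2.2.1)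
  have hφH : φ (b .H) = 0 :=
    odd_eq_zero oH (fun i => (keyEFH i).2.2.2.2.1) (fun i => (keyEFH i).2.2.2.2.2)
  -- Step 3 : φ x_i = 0
  have hφX : ∀ i, φ (b (.X i)) = 0 := by
    intro i
    have hx := hφ (b .H) (b (.X i))
    rw [hb.lie_h_x, hφH, zero_lie, zero_add] at hx
    -- hx : φ x_i = 2⁻¹ • ⁅h, φ x_i⁆
    have hy := hφ (b .H) (b (.Y i))
    rw [hb.lie_h_y, map_neg, hφH, zero_lie, zero_add] at hy
    -- hy : -φ y_i = 2⁻¹ • ⁅h, φ y_i⁆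
    have hyH : b.repr (φ (b (.Y i))) .H = 0 := by
      have h2 := congrArg (fun t => b.repr t SIdx.H) hy
      simp only [map_neg, map_smul, Finsupp.neg_apply, Finsupp.smul_apply, smul_eq_mul,
        repr_lie_h hb, hcoef] at h2
      linear_combination -h2
    have hx2 := hφ (b .E) (b (.Y i))
    rw [hb.lie_e_y, hφE, zero_lie, zero_add] at hx2
    -- hx2 : φ x_i = 2⁻¹ • ⁅e, φ y_i⁆
    refine even_eq_zero (eX i) ?_ ?_ ?_ ?_ ?_
    · have h2 := congrArg (fun t => b.repr t SIdx.E) hx2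
      simp only [map_smul, Finsupp.smul_apply, smul_eq_mul, repr_lieE_E hb, hyH] at h2
      simpa using h2
    · have h2 := congrArg (fun t => b.repr t SIdx.F) hx
      simp only [map_smul, Finsupp.smul_apply, smul_eq_mul, repr_lie_h hb, hcoef] at h2
      linear_combination (2⁻¹ : ℂ) * h2
    · have h2 := congrArg (fun t => b.repr t SIdx.H) hx
      simp only [map_smul, Finsupp.smul_apply, smul_eq_mul, repr_lie_h hb, hcoef] at h2
      linear_combination h2
    · have h2 := congrArg (fun t => b.repr t SIdx.Z) hx
      simp only [map_smul, Finsupp.smul_apply, smul_eq_mul, repr_lie_h hb, hcoef] at h2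
      linear_combination h2
    · intro j k h
      have h2 := congrArg (fun t => b.repr t (SIdx.S j k h)) hx
      simp only [map_smul, Finsupp.smul_apply, smul_eq_mul, repr_lie_h hb, hcoef] at h2
      linear_combination h2
  -- Step 4 : φ y_i = 0
  have hφY : ∀ i, φ (b (.Y i)) = 0 := by
    intro i
    have hy2 := hφ (b .F) (b (.X i))
    rw [hb.lie_f_x, hφF, zero_lie, zero_add, hφX i, lie_zero, smul_zero] at hy2
    exact hy2
  -- Step 5 : φ s_{jk} = 0
  have hφS : ∀ (j k : Fin n) (h : j < k), φ (b (.S j k h)) = 0 := by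
    intro j k h
    refine odd_eq_zero (oS j k h) ?_ ?_
    · intro i
      have h1 := hφ (b (.S j k h)) (b (.Y i))
      rw [lie_S_y hb j k h, map_sub, map_smul, map_smul, hφY j, hφY k, smul_zero,
        smul_zero, sub_zero, hφY i, lie_zero, add_zero] at h1
      -- h1 : 0 = 2⁻¹ • ⁅φ s, y_i⁆
      have h2 := congrArg (fun t => b.repr t SIdx.Z) h1
      simp only [map_zero, map_smul, Finsupp.coe_zero, Pi.zero_apply, Finsupp.smul_apply,
        smul_eq_mul, repr_lieY_Z hb] at h2
      linear_combination (-2 : ℂ) * h2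
    · intro i
      have h1 := hφ (b (.S j k h)) (b (.X i))
      rw [lie_S_x hb j k h, map_sub, map_smul, map_smul, hφX j, hφX k, smul_zero,
        smul_zero, sub_zero, hφX i, lie_zero, add_zero] at h1
      have h2 := congrArg (fun t => b.repr t SIdx.Z) h1
      simp only [map_zero, map_smul, Finsupp.coe_zero, Pi.zero_apply, Finsupp.smul_apply,
        smul_eq_mul, repr_lieX_Z hb] at h2
      linear_combination (2 : ℂ) * h2
  -- Conclusion
  refine b.ext fun u => ?_
  rw [LinearMap.zero_apply]
  cases u with
  | E => exact hφE
  | F => exact hφF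
  | H => exact hφH
  | Z => exact hφZ
  | X i => exact hφX i
  | Y i => exact hφY i
  | S j k h => exact hφS j k h
end
end

section
/- Every 1/2-derivation of the Schrödinger algebra S_1 is trivial, i.e. is a scalar multiple of the identity map. -/
noncomputable section

open Submodule

variable {n : ℕ} {L : Type*} [LieRing L] [LieAlgebra ℂ L]

deriving instance DecidableEq for SIdx

set_option maxHeartbeats 2000000 in
private lemma decomp1 (b : Module.Basis (SIdx 1) ℂ L) (v : L) :
    v = b.repr v .E • b .E + b.repr v .F • b .F + b.repr v .H • b .H +
        b.repr v .Z • b .Z + b.repr v (.X 0) • b (.X 0) + b.repr v (.Y 0) • b (.Y 0) := by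
  apply b.repr.injective
  ext u
  simp only [map_add, map_smul, Module.Basis.repr_self, Finsupp.add_apply, Finsupp.smul_apply,
    Finsupp.single_apply, smul_eq_mul]
  cases u with
  | E => simp
  | F => simp
  | H => simp
  | Z => simp
  | X i => have : i = 0 := Subsingleton.elim _ _; subst this; simp
  | Y i => have : i = 0 := Subsingleton.elim _ _; subst this; simp
  | S j k h => exact absurd h (by omega)

set_option maxHeartbeats 4000000 in
/-- Every `1/2`-derivation of the Schrödinger algebra `S₁`
is trivial, i.e. a scalar multiple of the identity. -/
theorem half_derivations_trivial_S1
    (L : Type*) [LieRing L] [LieAlgebra ℂ L]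
    (b : Module.Basis (SIdx 1) ℂ L) (hb : IsSchrodinger b)
    (φ : L →ₗ[ℂ] L) (hφ : IsHalfDeriv φ) :
    ∃ c : ℂ, φ = c • LinearMap.id := by
  classical
  have hd := decomp1 b
  have ec : ∀ {u w : L}, u = w → ∀ i : SIdx 1, b.repr u i = b.repr w i :=
    fun h i => by rw [h]
  have hφ2 : ∀ x y : L, (2:ℂ) • φ ⁅x, y⁆ = ⁅φ x, y⁆ + ⁅x, φ y⁆ := by
    intro x y; rw [hφ x y, smul_smul]; norm_num
  -- reversed structure constants
  have lfe : ⁅b .F, b .E⁆ = -b .H := by rw [← lie_skew, hb.lie_e_f]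
  have leh : ⁅b .E, b .H⁆ = -((2:ℂ) • b .E) := by rw [← lie_skew, hb.lie_h_e]
  have lhf : ⁅b .H, b .F⁆ = -((2:ℂ) • b .F) := by rw [← lie_skew, hb.lie_f_h]
  have lxh : ∀ i, ⁅b (.X i), b .H⁆ = -b (.X i) := fun i => by rw [← lie_skew, hb.lie_h_x]
  have lyh : ∀ i, ⁅b (.Y i), b .H⁆ = b (.Y i) := fun i => by
    rw [← lie_skew, hb.lie_h_y, neg_neg]
  have lye : ∀ i, ⁅b (.Y i), b .E⁆ = -b (.X i) := fun i => by rw [← lie_skew, hb.lie_e_y]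
  have lxe : ∀ i, ⁅b (.X i), b .E⁆ = 0 := fun i => by rw [← lie_skew, hb.lie_e_x, neg_zero]
  have lxf : ∀ i, ⁅b (.X i), b .F⁆ = -b (.Y i) := fun i => by rw [← lie_skew, hb.lie_f_x]
  have lyf : ∀ i, ⁅b (.Y i), b .F⁆ = 0 := fun i => by rw [← lie_skew, hb.lie_f_y, neg_zero]
  have lyx : ∀ i j, ⁅b (.Y i), b (.X j)⁆ = -(kd j i • b .Z) := fun i j => by
    rw [← lie_skew, hb.lie_x_y]
  have hbz : ∀ u : SIdx 1, ⁅b u, b .Z⁆ = 0 := fun u => by rw [← lie_skew, hb.lie_z, neg_zero]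
  have lxy0 : ⁅b (.X 0), b (.Y 0)⁆ = b .Z := by
    rw [hb.lie_x_y]; simp [kd]
  have lyx0 : ⁅b (.Y 0), b (.X 0)⁆ = -b .Z := by
    rw [← lie_skew, lxy0]
  -- Step 3: pair (h, e)
  have e3 := hφ2 (b .H) (b .E)
  rw [hb.lie_h_e, map_smul, hd (φ (b .H)), hd (φ (b .E))] at e3
  simp only [lie_add, add_lie, lie_smul, smul_lie, hb.lie_e_f, hb.lie_h_e, hb.lie_f_h,
    lxy0, lyx0, hb.lie_x_x, hb.lie_y_y, hb.lie_h_x, hb.lie_h_y, hb.lie_e_y, hb.lie_e_x,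
    hb.lie_f_x, hb.lie_f_y, hb.lie_z, lfe, leh, lhf, lxh, lyh, lye, lxe, lxf, lyf, hbz,
    lie_self, smul_zero, zero_add, add_zero, smul_smul, smul_neg, neg_smul, smul_add] at e3
  have q1 := ec e3 .E
  have q2 := ec e3 .F
  have q3 := ec e3 .H
  have q4 := ec e3 .Z
  have q5 := ec e3 (.X 0)
  have q6 := ec e3 (.Y 0)
  simp at q1 q2 q3 q4 q5 q6
  -- Step 4: pair (f, h)
  have e4 := hφ2 (b .F) (b .H)
  rw [hb.lie_f_h, map_smul, hd (φ (b .F)), hd (φ (b .H))] at e4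
  simp only [lie_add, add_lie, lie_smul, smul_lie, hb.lie_e_f, hb.lie_h_e, hb.lie_f_h,
    lxy0, lyx0, hb.lie_x_x, hb.lie_y_y, hb.lie_h_x, hb.lie_h_y, hb.lie_e_y, hb.lie_e_x,
    hb.lie_f_x, hb.lie_f_y, hb.lie_z, lfe, leh, lhf, lxh, lyh, lye, lxe, lxf, lyf, hbz,
    lie_self, smul_zero, zero_add, add_zero, smul_smul, smul_neg, neg_smul, smul_add] at e4
  have r1 := ec e4 .E
  have r2 := ec e4 .F
  have r3 := ec e4 .H
  have r4 := ec e4 .Z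
  have r5 := ec e4 (.X 0)
  have r6 := ec e4 (.Y 0)
  simp at r1 r2 r3 r4 r5 r6
  -- Step 5: pair (e, f)
  have e5 := hφ2 (b .E) (b .F)
  rw [hb.lie_e_f, hd (φ (b .E)), hd (φ (b .F)), hd (φ (b .H))] at e5
  simp only [lie_add, add_lie, lie_smul, smul_lie, hb.lie_e_f, hb.lie_h_e, hb.lie_f_h,
    lxy0, lyx0, hb.lie_x_x, hb.lie_y_y, hb.lie_h_x, hb.lie_h_y, hb.lie_e_y, hb.lie_e_x,
    hb.lie_f_x, hb.lie_f_y, hb.lie_z, lfe, leh, lhf, lxh, lyh, lye, lxe, lxf, lyf, hbz,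
    lie_self, smul_zero, zero_add, add_zero, smul_smul, smul_neg, neg_smul, smul_add] at e5
  have s1 := ec e5 .E
  have s2 := ec e5 .F
  have s3 := ec e5 .H
  have s4 := ec e5 .Z
  have s5 := ec e5 (.X 0)
  have s6 := ec e5 (.Y 0)
  simp at s1 s2 s3 s4 s5 s6
  -- solve the linear system for φe, φf, φh
  have haE : b.repr (φ (b .E)) .E = b.repr (φ (b .H)) .H := by linear_combination q1 / 2
  have haF : b.repr (φ (b .E)) .F = 0 := by linear_combination q2 / 6
  have haH : b.repr (φ (b .E)) .H = 0 := by linear_combination q3 / 3 - s2 / 6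
  have haZ : b.repr (φ (b .E)) .Z = 0 := q4
  have haX : b.repr (φ (b .E)) (.X 0) = 0 := by
    linear_combination (2/5 : ℂ) * q5 - (1/5 : ℂ) * s6
  have haY : b.repr (φ (b .E)) (.Y 0) = 0 := by linear_combination q6 / 5
  have hbE : b.repr (φ (b .F)) .E = 0 := by linear_combination r1 / 6
  have hbF : b.repr (φ (b .F)) .F = b.repr (φ (b .H)) .H := by linear_combination r2 / 2
  have hbH : b.repr (φ (b .F)) .H = 0 := by linear_combination r3 / 3 - s1 / 6
  have hbZ : b.repr (φ (b .F)) .Z = 0 := r4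
  have hbX : b.repr (φ (b .F)) (.X 0) = 0 := by linear_combination r5 / 5
  have hbY : b.repr (φ (b .F)) (.Y 0) = 0 := by
    linear_combination (2/5 : ℂ) * r6 + (1/5 : ℂ) * s5
  have hcE : b.repr (φ (b .H)) .E = 0 := by linear_combination s1 / 2 - hbH
  have hcF : b.repr (φ (b .H)) .F = 0 := by linear_combination s2 / 2 - haH
  have hcZ : b.repr (φ (b .H)) .Z = 0 := s4
  have hcX : b.repr (φ (b .H)) (.X 0) = 0 := by linear_combination s5 / 2 + hbY / 2
  have hcY : b.repr (φ (b .H)) (.Y 0) = 0 := by linear_combination s6 / 2 - haX / 2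
  set c := b.repr (φ (b .H)) .H with hc
  have vE : φ (b .E) = c • b .E := by
    rw [hd (φ (b .E)), haE, haF, haH, haZ, haX, haY]; simp
  have vF : φ (b .F) = c • b .F := by
    rw [hd (φ (b .F)), hbE, hbF, hbH, hbZ, hbX, hbY]; simp
  have vH : φ (b .H) = c • b .H := by
    rw [hd (φ (b .H)), ← hc, hcE, hcF, hcZ, hcX, hcY]; simp
  -- Step 6: pair (h, x)
  have e6 := hφ2 (b .H) (b (.X 0))
  rw [hb.lie_h_x, vH, hd (φ (b (.X 0)))] at e6
  simp only [lie_add, add_lie, lie_smul, smul_lie, hb.lie_e_f, hb.lie_h_e, hb.lie_f_h,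
    lxy0, lyx0, hb.lie_x_x, hb.lie_y_y, hb.lie_h_x, hb.lie_h_y, hb.lie_e_y, hb.lie_e_x,
    hb.lie_f_x, hb.lie_f_y, hb.lie_z, lfe, leh, lhf, lxh, lyh, lye, lxe, lxf, lyf, hbz,
    lie_self, smul_zero, zero_add, add_zero, smul_smul, smul_neg, neg_smul, smul_add] at e6
  have p1 := ec e6 .E
  have p2 := ec e6 .F
  have p3 := ec e6 .H
  have p4 := ec e6 .Z
  have p5 := ec e6 (.X 0)
  have p6 := ec e6 (.Y 0)
  simp at p1 p2 p3 p4 p5 p6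
  -- Step 7: pair (f, x)
  have e7 := hφ2 (b .F) (b (.X 0))
  rw [hb.lie_f_x, vF, hd (φ (b (.X 0))), hd (φ (b (.Y 0)))] at e7
  simp only [lie_add, add_lie, lie_smul, smul_lie, hb.lie_e_f, hb.lie_h_e, hb.lie_f_h,
    lxy0, lyx0, hb.lie_x_x, hb.lie_y_y, hb.lie_h_x, hb.lie_h_y, hb.lie_e_y, hb.lie_e_x,
    hb.lie_f_x, hb.lie_f_y, hb.lie_z, lfe, leh, lhf, lxh, lyh, lye, lxe, lxf, lyf, hbz,
    lie_self, smul_zero, zero_add, add_zero, smul_smul, smul_neg, neg_smul, smul_add] at e7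
  have t1 := ec e7 .E
  have t2 := ec e7 .F
  have t3 := ec e7 .H
  have t4 := ec e7 .Z
  have t5 := ec e7 (.X 0)
  have t6 := ec e7 (.Y 0)
  simp at t1 t2 t3 t4 t5 t6
  -- Step 8: pair (h, y)
  have e8 := hφ2 (b .H) (b (.Y 0))
  rw [hb.lie_h_y, map_neg, vH, hd (φ (b (.Y 0)))] at e8
  simp only [lie_add, add_lie, lie_smul, smul_lie, hb.lie_e_f, hb.lie_h_e, hb.lie_f_h,
    lxy0, lyx0, hb.lie_x_x, hb.lie_y_y, hb.lie_h_x, hb.lie_h_y, hb.lie_e_y, hb.lie_e_x,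
    hb.lie_f_x, hb.lie_f_y, hb.lie_z, lfe, leh, lhf, lxh, lyh, lye, lxe, lxf, lyf, hbz,
    lie_self, smul_zero, zero_add, add_zero, smul_smul, smul_neg, neg_smul, smul_add,
    smul_neg, neg_add] at e8
  have u3 := ec e8 .H
  simp at u3
  -- assemble φx, φy
  have hpE : b.repr (φ (b (.X 0))) .E = 0 := by linear_combination t3 - (2 : ℂ) * u3
  have hpF : b.repr (φ (b (.X 0))) .F = 0 := by linear_combination p2 / 4
  have hpX : b.repr (φ (b (.X 0))) (.X 0) = c := by linear_combination p5
  have hpY : b.repr (φ (b (.X 0))) (.Y 0) = 0 := by linear_combination p6 / 3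
  have vX : φ (b (.X 0)) = c • b (.X 0) := by
    rw [hd (φ (b (.X 0))), hpE, hpF, p3, p4, hpX, hpY]; simp
  have hqF : b.repr (φ (b (.Y 0))) .F = 0 := by linear_combination t2 / 2 + p3
  have hqY : b.repr (φ (b (.Y 0))) (.Y 0) = c := by linear_combination t6 / 2 + hpX / 2
  have vY : φ (b (.Y 0)) = c • b (.Y 0) := by
    rw [hd (φ (b (.Y 0))), t1, hqF, u3, t4, t5, hqY]; simp
  -- Step 9: pair (x, y) gives φz
  have e9 := hφ2 (b (.X 0)) (b (.Y 0))
  rw [lxy0, vX, vY, hd (φ (b .Z))] at e9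
  simp only [lie_add, add_lie, lie_smul, smul_lie, hb.lie_e_f, hb.lie_h_e, hb.lie_f_h,
    lxy0, lyx0, hb.lie_x_x, hb.lie_y_y, hb.lie_h_x, hb.lie_h_y, hb.lie_e_y, hb.lie_e_x,
    hb.lie_f_x, hb.lie_f_y, hb.lie_z, lfe, leh, lhf, lxh, lyh, lye, lxe, lxf, lyf, hbz,
    lie_self, smul_zero, zero_add, add_zero, smul_smul, smul_neg, neg_smul, smul_add] at e9
  have w1 := ec e9 .E
  have w2 := ec e9 .F
  have w3 := ec e9 .H
  have w4 := ec e9 .Z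
  have w5 := ec e9 (.X 0)
  have w6 := ec e9 (.Y 0)
  simp at w1 w2 w3 w4 w5 w6
  have hwZ : b.repr (φ (b .Z)) .Z = c := by linear_combination w4 / 2
  have vZ : φ (b .Z) = c • b .Z := by
    rw [hd (φ (b .Z)), w1, w2, w3, hwZ, w5, w6]; simp
  refine ⟨c, Module.Basis.ext b ?_⟩
  intro i
  cases i with
  | E => simpa using vE
  | F => simpa using vF
  | H => simpa using vH
  | Z => simpa using vZ
  | X i => have : i = 0 := Subsingleton.elim _ _; subst this; simpa using vX
  | Y i => have : i = 0 := Subsingleton.elim _ _; subst this; simpa using vY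
  | S j k h => exact absurd h (by omega)
end
end
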